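/- arXiv:2111.00889 — 3 statements merged into one kernel-verified Lean document; each statement's English description precedes it below -/
import Mathlib

section
/- For a generalized Sierpiński carpet F = F(N,D) and the sets Q_n defined by Q₀ = [0,1]² and Q_n = ⋃_{i∈D} φ_i(Q_{n-1}), the carpet F is connected if and only if Q₃ is connected. -/
open Set Topology

noncomputable def phi (N : ℕ) (i : ℕ × ℕ) (p : ℝ × ℝ) : ℝ × ℝ :=
  ((p.1 + (i.1 : ℝ)) / (N : ℝ), (p.2 + (i.2 : ℝ)) / (N : ℝ))

noncomputable def phiW (N : ℕ) (l : List (ℕ × ℕ)) : ℝ × ℝ → ℝ × ℝ :=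
  l.foldr (fun i g => phi N i ∘ g) id

def Words (D : Finset (ℕ × ℕ)) (k : ℕ) : Set (List (ℕ × ℕ)) :=
  {l | l.length = k ∧ ∀ a ∈ l, a ∈ D}

def GoodDigits (N : ℕ) (D : Finset (ℕ × ℕ)) : Prop :=
  2 ≤ N ∧ (∀ i ∈ D, i.1 < N ∧ i.2 < N) ∧ 1 < D.card ∧ D.card < N ^ 2

def IsAttractor (N : ℕ) (D : Finset (ℕ × ℕ)) (F : Set (ℝ × ℝ)) : Prop :=
  F.Nonempty ∧ IsCompact F ∧ F = ⋃ i ∈ D, phi N i '' F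

def OmegaW (N : ℕ) (D : Finset (ℕ × ℕ)) (F : Set (ℝ × ℝ)) (x : ℝ × ℝ) (k : ℕ) :
    Set (List (ℕ × ℕ)) :=
  {l | l ∈ Words D k ∧ x ∈ phiW N l '' F}

def Ek (N : ℕ) (D : Finset (ℕ × ℕ)) (F : Set (ℝ × ℝ)) (x : ℝ × ℝ) (k : ℕ) :
    Set (ℝ × ℝ) :=
  ⋃ l ∈ Words D k \ OmegaW N D F x k, phiW N l '' F

def IsRep (N : ℕ) (D : Finset (ℕ × ℕ)) (F : Set (ℝ × ℝ)) (x : ℝ × ℝ)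
    (ii : ℕ → ℕ × ℕ) : Prop :=
  (∀ k, ii k ∈ D) ∧ ∀ k : ℕ, x ∈ phiW N (List.ofFn fun j : Fin k => ii (j : ℕ)) '' F

def SepComp (E A B : Set (ℝ × ℝ)) : Prop :=
  A ⊆ E ∧ B ⊆ E ∧
    ∀ y ∈ A, ∀ z ∈ B, connectedComponentIn E y ≠ connectedComponentIn E z

def WellSep (N : ℕ) (D : Finset (ℕ × ℕ)) (F : Set (ℝ × ℝ)) (x : ℝ × ℝ) (n : ℕ)
    (ω τ : List (ℕ × ℕ)) : Prop :=
  ∀ p : ℕ, 1 ≤ p → SepComp (Ek N D F x (n + p)) (phiW N ω '' F) (phiW N τ '' F)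
section Aux

open Metric

variable {N : ℕ} {D : Finset (ℕ × ℕ)} {F : Set (ℝ × ℝ)}

lemma Npos (hN : 2 ≤ N) : (0:ℝ) < N := by
  have : (0:ℕ) < N := by omega
  exact_mod_cast this

lemma phi_cont (N : ℕ) (i : ℕ × ℕ) : Continuous (phi N i) := by
  unfold phi
  fun_prop

lemma dist_phi (hN : 2 ≤ N) (i : ℕ × ℕ) (p q : ℝ × ℝ) :
    dist (phi N i p) (phi N i q) = dist p q / N := by
  have h0 : (0:ℝ) < N := Npos hN
  simp only [phi, Prod.dist_eq, Real.dist_eq]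
  rw [div_sub_div_same, div_sub_div_same, abs_div, abs_div,
    abs_of_pos h0, ← max_div_div_right h0.le]
  ring_nf

lemma phi_image_subset (hF : IsAttractor N D F) {i : ℕ × ℕ} (hi : i ∈ D) :
    phi N i '' F ⊆ F := by
  conv_rhs => rw [hF.2.2]
  intro x hx
  exact Set.mem_biUnion hi hx

lemma F_subset_Icc (hN : 2 ≤ N) (hD : ∀ i ∈ D, i.1 < N ∧ i.2 < N)
    (hF : IsAttractor N D F) : F ⊆ Set.Icc ((0:ℝ), (0:ℝ)) (1, 1) := by
  have h0 : (0:ℝ) < N := Npos hN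
  have hN2 : (2:ℝ) ≤ N := by exact_mod_cast hN
  have key : ∀ f : ℝ × ℝ → ℝ, Continuous f →
      (∀ i ∈ D, ∀ p : ℝ × ℝ, f (phi N i p) * N ≤ f p + (N - 1) ∧ f p ≤ f (phi N i p) * N) →
      ∀ x ∈ F, 0 ≤ f x ∧ f x ≤ 1 := by
    intro f hf hcomp
    obtain ⟨xM, hxM, hmax⟩ := hF.2.1.exists_isMaxOn hF.1 hf.continuousOn
    obtain ⟨xm, hxm, hmin⟩ := hF.2.1.exists_isMinOn hF.1 hf.continuousOn
    have hxM' : xM ∈ ⋃ i ∈ D, phi N i '' F := by rw [← hF.2.2]; exact hxM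
    have hxm' : xm ∈ ⋃ i ∈ D, phi N i '' F := by rw [← hF.2.2]; exact hxm
    simp only [Set.mem_iUnion, Set.mem_image] at hxM' hxm'
    obtain ⟨i, hi, p, hp, hpe⟩ := hxM'
    obtain ⟨j, hj, q, hq, hqe⟩ := hxm'
    have h1 : f xM ≤ 1 := by
      have := (hcomp i hi p).1
      rw [hpe] at this
      have hple : f p ≤ f xM := hmax hp
      nlinarith
    have h2 : 0 ≤ f xm := by
      have := (hcomp j hj q).2
      rw [hqe] at this
      have hqge : f xm ≤ f q := hmin hq
      nlinarith
    intro x hx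
    exact ⟨le_trans h2 (hmin hx), le_trans (hmax hx) h1⟩
  have hcast : ∀ i ∈ D, (i.1:ℝ) ≤ N - 1 ∧ (i.2:ℝ) ≤ N - 1 := by
    intro i hi
    obtain ⟨h1, h2⟩ := hD i hi
    have c1 : (i.1:ℝ) + 1 ≤ N := by exact_mod_cast h1
    have c2 : (i.2:ℝ) + 1 ≤ N := by exact_mod_cast h2
    constructor <;> linarith
  intro x hx
  have k1 := key (fun p => p.1) continuous_fst ?_ x hx
  have k2 := key (fun p => p.2) continuous_snd ?_ x hx
  · exact ⟨⟨k1.1, k2.1⟩, ⟨k1.2, k2.2⟩⟩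
  all_goals
    intro i hi p
    simp only [phi]
    obtain ⟨ha, hb⟩ := hcast i hi
    have hge1 : (0:ℝ) ≤ (i.1:ℝ) := Nat.cast_nonneg _
    have hge2 : (0:ℝ) ≤ (i.2:ℝ) := Nat.cast_nonneg _
    rw [div_mul_cancel₀ _ (ne_of_gt h0)]
    constructor <;> linarith

end Aux
section Dir1

variable {N : ℕ} {D : Finset (ℕ × ℕ)} {F : Set (ℝ × ℝ)} {Q : ℕ → Set (ℝ × ℝ)}

lemma F_subset_Q (hN : 2 ≤ N) (hD : ∀ i ∈ D, i.1 < N ∧ i.2 < N)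
    (hF : IsAttractor N D F)
    (hQ0 : Q 0 = Set.Icc ((0 : ℝ), (0 : ℝ)) (1, 1))
    (hQ : ∀ n, Q (n + 1) = ⋃ i ∈ D, phi N i '' Q n) :
    ∀ n, F ⊆ Q n := by
  intro n
  induction n with
  | zero => rw [hQ0]; exact F_subset_Icc hN hD hF
  | succ n ih =>
    rw [hQ n]
    conv_lhs => rw [hF.2.2]
    exact Set.iUnion₂_mono fun i _ => Set.image_mono ih

lemma Icc_connected : IsConnected (Set.Icc ((0 : ℝ), (0 : ℝ)) (1, 1)) := by
  rw [Set.Icc_prod_eq]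
  exact (isConnected_Icc (by norm_num)).prod (isConnected_Icc (by norm_num))

lemma Q_connected_of_F (hN : 2 ≤ N) (hD : ∀ i ∈ D, i.1 < N ∧ i.2 < N)
    (hF : IsAttractor N D F) (hFc : IsConnected F)
    (hQ0 : Q 0 = Set.Icc ((0 : ℝ), (0 : ℝ)) (1, 1))
    (hQ : ∀ n, Q (n + 1) = ⋃ i ∈ D, phi N i '' Q n) :
    ∀ n, IsConnected (Q n) := by
  intro n
  induction n with
  | zero => rw [hQ0]; exact Icc_connected
  | succ n ih =>
    obtain ⟨x0, hx0⟩ := hF.1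
    have hsub := F_subset_Q hN hD hF hQ0 hQ
    have hQeq : Q (n+1) = ⋃₀ ((fun i => F ∪ phi N i '' Q n) '' ↑D) := by
      apply Set.Subset.antisymm
      · rw [hQ n]
        intro x hx
        simp only [Set.mem_iUnion] at hx
        obtain ⟨i, hi, hxi⟩ := hx
        exact ⟨F ∪ phi N i '' Q n, ⟨i, hi, rfl⟩, Or.inr hxi⟩
      · intro x hx
        obtain ⟨s, ⟨i, hi, rfl⟩, hxs⟩ := hx
        rcases hxs with h | h
        · exact hsub (n+1) h
        · rw [hQ n]; exact Set.mem_biUnion hi h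
    constructor
    · exact ⟨x0, hsub (n+1) hx0⟩
    · rw [hQeq]
      apply isPreconnected_sUnion x0
      · rintro s ⟨i, hi, rfl⟩
        exact Or.inl hx0
      · rintro s ⟨i, hi, rfl⟩
        apply IsPreconnected.union (phi N i x0)
        · exact phi_image_subset hF hi ⟨x0, hx0, rfl⟩
        · exact ⟨x0, hsub n hx0, rfl⟩
        · exact hFc.2
        · exact ih.2.image _ (phi_cont N i).continuousOn

end Dir1
section Geom

variable {N : ℕ} {D : Finset (ℕ × ℕ)} {F : Set (ℝ × ℝ)} {Q : ℕ → Set (ℝ × ℝ)}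

lemma Ngt1 (hN : 2 ≤ N) : (1:ℝ) < N := by
  have : (1:ℕ) < N := by omega
  exact_mod_cast this

lemma fix_mem (hN : 2 ≤ N) (hF : IsAttractor N D F) {m : ℕ × ℕ} (hm : m ∈ D) :
    (((m.1:ℝ)/((N:ℝ)-1)), ((m.2:ℝ)/((N:ℝ)-1))) ∈ F := by
  have h0 : (0:ℝ) < N := Npos hN
  have h1 : (1:ℝ) < N := Ngt1 hN
  have hne : (N:ℝ) - 1 ≠ 0 := by linarith
  set z : ℝ × ℝ := (((m.1:ℝ)/((N:ℝ)-1)), ((m.2:ℝ)/((N:ℝ)-1))) with hz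
  have hfix : phi N m z = z := by
    simp only [phi, hz, Prod.mk.injEq]
    constructor <;> (field_simp; ring)
  obtain ⟨q0, hq0⟩ := hF.1
  have hiter : ∀ n, (phi N m)^[n] q0 ∈ F := by
    intro n
    induction n with
    | zero => exact hq0
    | succ n ih =>
      rw [Function.iterate_succ_apply']
      exact phi_image_subset hF hm ⟨_, ih, rfl⟩
  have hdist : ∀ n, dist z ((phi N m)^[n] q0) = dist z q0 / (N:ℝ)^n := by
    intro n
    induction n with
    | zero => simp
    | succ n ih =>
      rw [Function.iterate_succ_apply']
      calc dist z (phi N m ((phi N m)^[n] q0))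
          = dist (phi N m z) (phi N m ((phi N m)^[n] q0)) := by rw [hfix]
        _ = dist z ((phi N m)^[n] q0) / N := dist_phi hN m _ _
        _ = dist z q0 / (N:ℝ)^(n+1) := by rw [ih]; rw [div_div, ← pow_succ]
  have hcl : z ∈ closure F := by
    rw [Metric.mem_closure_iff]
    intro ε hε
    obtain ⟨n, hn⟩ := pow_unbounded_of_one_lt (dist z q0 / ε) h1
    refine ⟨_, hiter n, ?_⟩
    rw [hdist n]
    rw [div_lt_iff₀ (by positivity)] at hn ⊢
    nlinarith [pow_pos h0 n]
  rwa [hF.2.1.isClosed.closure_eq] at hcl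

lemma Q_subset_Icc (hN : 2 ≤ N) (hD : ∀ i ∈ D, i.1 < N ∧ i.2 < N)
    (hQ0 : Q 0 = Set.Icc ((0 : ℝ), (0 : ℝ)) (1, 1))
    (hQ : ∀ n, Q (n + 1) = ⋃ i ∈ D, phi N i '' Q n) :
    ∀ n, Q n ⊆ Set.Icc ((0 : ℝ), (0 : ℝ)) (1, 1) := by
  have h0 : (0:ℝ) < N := Npos hN
  intro n
  induction n with
  | zero => rw [hQ0]
  | succ n ih =>
    rw [hQ n]
    rintro x hx
    simp only [Set.mem_iUnion] at hx
    obtain ⟨i, hi, p, hp, rfl⟩ := hx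
    have hp' := ih hp
    simp only [Set.mem_Icc, Prod.le_def] at hp' ⊢
    obtain ⟨⟨hp1, hp2⟩, hp3, hp4⟩ := hp'
    have hi1 : (i.1:ℝ) + 1 ≤ N := by exact_mod_cast (hD i hi).1
    have hi2 : (i.2:ℝ) + 1 ≤ N := by exact_mod_cast (hD i hi).2
    have hi1' : (0:ℝ) ≤ i.1 := Nat.cast_nonneg _
    have hi2' : (0:ℝ) ≤ i.2 := Nat.cast_nonneg _
    simp only [phi]
    refine ⟨⟨by positivity, by positivity⟩, ?_, ?_⟩ <;>
      · rw [div_le_one h0]; linarith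

lemma q2_aux {N : ℝ} (hne : N ≠ 0) (p b a : ℝ) :
    ((p + b)/N + a)/N * N^2 = p + b + a*N := by
  rw [div_add' _ _ _ hne, div_div, div_mul_eq_mul_div, pow_two, mul_div_assoc,
    div_self (mul_ne_zero hne hne), mul_one]

lemma mem_Q2 (hN : 2 ≤ N)
    (hQ0 : Q 0 = Set.Icc ((0 : ℝ), (0 : ℝ)) (1, 1))
    (hQ : ∀ n, Q (n + 1) = ⋃ i ∈ D, phi N i '' Q n) {x : ℝ × ℝ} :
    x ∈ Q 2 ↔ ∃ a ∈ D, ∃ b ∈ D, ∃ p ∈ Set.Icc ((0 : ℝ), (0 : ℝ)) (1, 1),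
      x.1 * (N:ℝ)^2 = p.1 + b.1 + a.1 * N ∧ x.2 * (N:ℝ)^2 = p.2 + b.2 + a.2 * N := by
  have h0 : (0:ℝ) < N := Npos hN
  have hne : (N:ℝ) ≠ 0 := ne_of_gt h0
  have h2 : Q 2 = ⋃ i ∈ D, phi N i '' Q 1 := hQ 1
  have h1 : Q 1 = ⋃ i ∈ D, phi N i '' Q 0 := hQ 0
  rw [h2]
  simp only [Set.mem_iUnion, h1, Set.mem_image, hQ0]
  constructor
  · rintro ⟨a, ha, y, ⟨b, hb, p, hp, rfl⟩, rfl⟩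
    refine ⟨a, ha, b, hb, p, hp, ?_, ?_⟩ <;>
      · simp only [phi]; exact q2_aux hne _ _ _
  · rintro ⟨a, ha, b, hb, p, hp, e1, e2⟩
    refine ⟨a, ha, phi N b p, ⟨b, hb, p, hp, rfl⟩, ?_⟩
    have : x = phi N a (phi N b p) := by
      have : (N:ℝ)^2 ≠ 0 := by positivity
      apply Prod.ext <;> (simp only [phi]; field_simp at e1 e2 ⊢; linarith)
    exact this.symm

end Geom
section Digits

lemma digit_unique {n a b c d : ℤ} (hb : 0 ≤ b) (hbn : b < n) (hd : 0 ≤ d) (hdn : d < n)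
    (h : a*n + b = c*n + d) : a = c ∧ b = d := by
  have hn : 0 < n := lt_of_le_of_lt hb hbn
  have hac : a = c := by
    rcases lt_trichotomy a c with h1 | h1 | h1
    · have h2 : (a+1) * n ≤ c * n := mul_le_mul_of_nonneg_right (by omega) hn.le
      nlinarith
    · exact h1
    · have h2 : (c+1) * n ≤ a * n := mul_le_mul_of_nonneg_right (by omega) hn.le
      nlinarith
  refine ⟨hac, ?_⟩
  have : a * n = c * n := by rw [hac]
  linarith

lemma digit_split {n a b c d : ℤ} (hn : 2 ≤ n) (hb : 0 ≤ b) (hbn : b < n)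
    (hd : 0 ≤ d) (hdn : d < n) (h : a*n + b + 1 = c*n + d) :
    (c = a ∧ d = b + 1) ∨ (b = n-1 ∧ d = 0 ∧ c = a+1) := by
  rcases lt_or_ge (b+1) n with h1 | h1
  · left
    have := digit_unique (by omega) h1 hd hdn (by linarith : a*n + (b+1) = c*n + d)
    exact ⟨this.1.symm, this.2.symm⟩
  · right
    have hb1 : b = n - 1 := by omega
    have he : (a+1)*n + 0 = c*n + d := by
      have : a*n + b + 1 = (a+1)*n + 0 := by rw [hb1]; ring
      linarith
    have := digit_unique (le_refl 0) (by omega) hd hdn he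
    exact ⟨hb1, this.2.symm, this.1.symm⟩

lemma digits_hi {n a b : ℤ} (hn : 2 ≤ n) (ha : a ≤ n-1) (hb : b ≤ n-1)
    (h : n*n ≤ a*n + b + 1) : a = n-1 ∧ b = n-1 := by
  have h1 : a = n - 1 := by
    by_contra hc
    have h2 : a ≤ n - 2 := by
      rcases lt_or_ge a (n-1) with h3 | h3
      · omega
      · omega
    nlinarith
  refine ⟨h1, by nlinarith⟩

lemma digits_lo {n a b : ℤ} (hn : 2 ≤ n) (ha : 0 ≤ a) (hb : 0 ≤ b)
    (h : a*n + b ≤ 0) : a = 0 ∧ b = 0 := by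
  have hn0 : 0 < n := by omega
  constructor
  · by_contra hc
    have : 1 ≤ a := by omega
    nlinarith
  · nlinarith [mul_nonneg ha hn0.le]

end Digits

section Extract

variable {N : ℕ} {D : Finset (ℕ × ℕ)} {Q : ℕ → Set (ℝ × ℝ)}

/-- data extracted from membership in `Q 2`. -/
lemma extract_gen (hN : 2 ≤ N)
    (hQ0 : Q 0 = Set.Icc ((0 : ℝ), (0 : ℝ)) (1, 1))
    (hQ : ∀ n, Q (n + 1) = ⋃ i ∈ D, phi N i '' Q n) {x : ℝ × ℝ} (hx : x ∈ Q 2) :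
    ∃ a ∈ D, ∃ b ∈ D,
      ((a.1 * N + b.1 : ℕ) : ℝ) / (N:ℝ)^2 ≤ x.1 ∧
      x.1 ≤ (((a.1 * N + b.1 : ℕ) : ℝ) + 1) / (N:ℝ)^2 ∧
      ((a.2 * N + b.2 : ℕ) : ℝ) / (N:ℝ)^2 ≤ x.2 ∧
      x.2 ≤ (((a.2 * N + b.2 : ℕ) : ℝ) + 1) / (N:ℝ)^2 := by
  have h0 : (0:ℝ) < N := Npos hN
  have hp2 : (0:ℝ) < (N:ℝ)^2 := by positivity
  obtain ⟨a, ha, b, hb, p, hp, e1, e2⟩ := (mem_Q2 hN hQ0 hQ).1 hx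
  simp only [Set.mem_Icc, Prod.le_def] at hp
  obtain ⟨⟨hp1, hp2'⟩, hp3, hp4⟩ := hp
  refine ⟨a, ha, b, hb, ?_, ?_, ?_, ?_⟩ <;>
    [rw [div_le_iff₀ hp2]; rw [le_div_iff₀ hp2]; rw [div_le_iff₀ hp2]; rw [le_div_iff₀ hp2]] <;>
    push_cast <;> linarith

end Extract
section Edge

variable {N : ℕ} {D : Finset (ℕ × ℕ)} {F : Set (ℝ × ℝ)}

lemma cast_pred (hN : 2 ≤ N) : (((N-1 : ℕ)):ℝ) = (N:ℝ) - 1 := by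
  have : 1 ≤ N := by omega
  push_cast [this]
  ring

lemma fix_mem' (hN : 2 ≤ N) (hF : IsAttractor N D F) {m : ℕ × ℕ} (hm : m ∈ D)
    {u v : ℝ} (hu : (m.1:ℝ) = u * ((N:ℝ)-1)) (hv : (m.2:ℝ) = v * ((N:ℝ)-1)) :
    (u, v) ∈ F := by
  have h1 : (1:ℝ) < N := Ngt1 hN
  have hne : (N:ℝ) - 1 ≠ 0 := by linarith
  have := fix_mem hN hF hm
  rw [hu, hv, mul_div_cancel_right₀ _ hne, mul_div_cancel_right₀ _ hne] at this
  exact this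

lemma edge_h (hN : 2 ≤ N) (hF : IsAttractor N D F)
    {a b c d : ℕ × ℕ} (ha : a ∈ D) (hb : b ∈ D) (hc : c ∈ D) (hd : d ∈ D)
    (hDa : a.2 < N) (hDb : b.2 < N) (hDc : c.2 < N) (hDd : d.2 < N)
    (ha1 : a.1 = N-1) (hb1 : b.1 = N-1) (hc1 : c.1 = 0) (hd1 : d.1 = 0)
    (hnear1 : ((a.2*N+b.2 : ℕ):ℤ) ≤ ((c.2*N+d.2 : ℕ):ℤ) + 1)
    (hnear2 : ((c.2*N+d.2 : ℕ):ℤ) ≤ ((a.2*N+b.2 : ℕ):ℤ) + 1) :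
    ∃ p ∈ F, ∃ q ∈ F, p.1 = q.1 + 1 ∧ p.2 = q.2 := by
  have h1 : (1:ℝ) < N := Ngt1 hN
  have h0 : (0:ℝ) < N := Npos hN
  have hne : (N:ℝ) - 1 ≠ 0 := by linarith
  have hN0 : (N:ℝ) ≠ 0 := ne_of_gt h0
  have hNZ : (2:ℤ) ≤ N := by exact_mod_cast hN
  have ha1' : (a.1:ℝ) = (N:ℝ) - 1 := by rw [ha1, cast_pred hN]
  have hc1' : (c.1:ℝ) = 0 := by rw [hc1]; norm_num
  by_cases hac : a.2 = c.2
  · -- common fixed point height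
    refine ⟨(1, (a.2:ℝ)/((N:ℝ)-1)), ?_, (0, (c.2:ℝ)/((N:ℝ)-1)), ?_, by norm_num, by rw [hac]⟩
    · have := fix_mem hN hF ha
      rwa [ha1', div_self hne] at this
    · have := fix_mem hN hF hc
      rwa [hc1', zero_div] at this
  · -- heights differ by one in digit expansion
    push_cast at hnear1 hnear2
    have hBC : (a.2:ℤ)*N + b.2 ≠ (c.2:ℤ)*N + d.2 := by
      intro h
      have := digit_unique (by positivity) (by exact_mod_cast hDb)
        (by positivity) (by exact_mod_cast hDd) h
      exact hac (by exact_mod_cast this.1)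
    rcases lt_or_gt_of_ne hBC with hlt | hgt
    · -- C = B + 1
      have heq : (a.2:ℤ)*N + b.2 + 1 = (c.2:ℤ)*N + d.2 := by omega
      rcases digit_split hNZ (by positivity) (by exact_mod_cast hDb)
        (by positivity) (by exact_mod_cast hDd) heq with ⟨h1', _⟩ | ⟨hB, hD0, hC⟩
      · exact absurd (by exact_mod_cast h1' : c.2 = a.2).symm hac
      · have hb2 : b.2 = N - 1 := by omega
        have hd2 : d.2 = 0 := by omega
        have hfb : ((1:ℝ), (1:ℝ)) ∈ F :=
          fix_mem' hN hF hb (by rw [hb1, cast_pred hN]; ring) (by rw [hb2, cast_pred hN]; ring)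
        have hfd : ((0:ℝ), (0:ℝ)) ∈ F :=
          fix_mem' hN hF hd (by rw [hd1]; push_cast; ring) (by rw [hd2]; push_cast; ring)
        refine ⟨phi N a (1,1), phi_image_subset hF ha ⟨_, hfb, rfl⟩,
          phi N c (0,0), phi_image_subset hF hc ⟨_, hfd, rfl⟩, ?_, ?_⟩
        · simp only [phi, ha1', hc1']
          field_simp
          ring
        · simp only [phi]
          have : (c.2:ℝ) = (a.2:ℝ) + 1 := by exact_mod_cast hC
          rw [this]
          ring
    · -- B = C + 1
      have heq : (c.2:ℤ)*N + d.2 + 1 = (a.2:ℤ)*N + b.2 := by omega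
      rcases digit_split hNZ (by positivity) (by exact_mod_cast hDd)
        (by positivity) (by exact_mod_cast hDb) heq with ⟨h1', _⟩ | ⟨hD', hB0, hA⟩
      · exact absurd (by exact_mod_cast h1' : a.2 = c.2) hac
      · have hd2 : d.2 = N - 1 := by omega
        have hb2 : b.2 = 0 := by omega
        have hfb : ((1:ℝ), (0:ℝ)) ∈ F :=
          fix_mem' hN hF hb (by rw [hb1, cast_pred hN]; ring) (by rw [hb2]; push_cast; ring)
        have hfd : ((0:ℝ), (1:ℝ)) ∈ F :=
          fix_mem' hN hF hd (by rw [hd1]; push_cast; ring) (by rw [hd2, cast_pred hN]; ring)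
        refine ⟨phi N a (1,0), phi_image_subset hF ha ⟨_, hfb, rfl⟩,
          phi N c (0,1), phi_image_subset hF hc ⟨_, hfd, rfl⟩, ?_, ?_⟩
        · simp only [phi, ha1', hc1']
          field_simp
          ring
        · simp only [phi]
          have : (a.2:ℝ) = (c.2:ℝ) + 1 := by exact_mod_cast hA
          rw [this]
          ring

end Edge
section EdgeV

variable {N : ℕ} {D : Finset (ℕ × ℕ)} {F : Set (ℝ × ℝ)}

lemma edge_v (hN : 2 ≤ N) (hF : IsAttractor N D F)
    {a b c d : ℕ × ℕ} (ha : a ∈ D) (hb : b ∈ D) (hc : c ∈ D) (hd : d ∈ D)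
    (hDa : a.1 < N) (hDb : b.1 < N) (hDc : c.1 < N) (hDd : d.1 < N)
    (ha1 : a.2 = N-1) (hb1 : b.2 = N-1) (hc1 : c.2 = 0) (hd1 : d.2 = 0)
    (hnear1 : ((a.1*N+b.1 : ℕ):ℤ) ≤ ((c.1*N+d.1 : ℕ):ℤ) + 1)
    (hnear2 : ((c.1*N+d.1 : ℕ):ℤ) ≤ ((a.1*N+b.1 : ℕ):ℤ) + 1) :
    ∃ p ∈ F, ∃ q ∈ F, p.2 = q.2 + 1 ∧ p.1 = q.1 := by
  have h1 : (1:ℝ) < N := Ngt1 hN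
  have h0 : (0:ℝ) < N := Npos hN
  have hne : (N:ℝ) - 1 ≠ 0 := by linarith
  have hN0 : (N:ℝ) ≠ 0 := ne_of_gt h0
  have hNZ : (2:ℤ) ≤ N := by exact_mod_cast hN
  have ha1' : (a.2:ℝ) = (N:ℝ) - 1 := by rw [ha1, cast_pred hN]
  have hc1' : (c.2:ℝ) = 0 := by rw [hc1]; norm_num
  by_cases hac : a.1 = c.1
  · refine ⟨((a.1:ℝ)/((N:ℝ)-1), 1), ?_, ((c.1:ℝ)/((N:ℝ)-1), 0), ?_, by norm_num, by rw [hac]⟩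
    · have := fix_mem hN hF ha
      rwa [ha1', div_self hne] at this
    · have := fix_mem hN hF hc
      rwa [hc1', zero_div] at this
  · push_cast at hnear1 hnear2
    have hBC : (a.1:ℤ)*N + b.1 ≠ (c.1:ℤ)*N + d.1 := by
      intro h
      have := digit_unique (by positivity) (by exact_mod_cast hDb)
        (by positivity) (by exact_mod_cast hDd) h
      exact hac (by exact_mod_cast this.1)
    rcases lt_or_gt_of_ne hBC with hlt | hgt
    · have heq : (a.1:ℤ)*N + b.1 + 1 = (c.1:ℤ)*N + d.1 := by omega
      rcases digit_split hNZ (by positivity) (by exact_mod_cast hDb)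
        (by positivity) (by exact_mod_cast hDd) heq with ⟨h1', _⟩ | ⟨hB, hD0, hC⟩
      · exact absurd (by exact_mod_cast h1' : c.1 = a.1).symm hac
      · have hb2 : b.1 = N - 1 := by omega
        have hd2 : d.1 = 0 := by omega
        have hfb : ((1:ℝ), (1:ℝ)) ∈ F :=
          fix_mem' hN hF hb (by rw [hb2, cast_pred hN]; ring) (by rw [hb1, cast_pred hN]; ring)
        have hfd : ((0:ℝ), (0:ℝ)) ∈ F :=
          fix_mem' hN hF hd (by rw [hd2]; push_cast; ring) (by rw [hd1]; push_cast; ring)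
        refine ⟨phi N a (1,1), phi_image_subset hF ha ⟨_, hfb, rfl⟩,
          phi N c (0,0), phi_image_subset hF hc ⟨_, hfd, rfl⟩, ?_, ?_⟩
        · simp only [phi, ha1', hc1']
          field_simp
          ring
        · simp only [phi]
          have : (c.1:ℝ) = (a.1:ℝ) + 1 := by exact_mod_cast hC
          rw [this]
          ring
    · have heq : (c.1:ℤ)*N + d.1 + 1 = (a.1:ℤ)*N + b.1 := by omega
      rcases digit_split hNZ (by positivity) (by exact_mod_cast hDd)
        (by positivity) (by exact_mod_cast hDb) heq with ⟨h1', _⟩ | ⟨hD', hB0, hA⟩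
      · exact absurd (by exact_mod_cast h1' : a.1 = c.1) hac
      · have hd2 : d.1 = N - 1 := by omega
        have hb2 : b.1 = 0 := by omega
        have hfb : ((0:ℝ), (1:ℝ)) ∈ F :=
          fix_mem' hN hF hb (by rw [hb2]; push_cast; ring) (by rw [hb1, cast_pred hN]; ring)
        have hfd : ((1:ℝ), (0:ℝ)) ∈ F :=
          fix_mem' hN hF hd (by rw [hd2, cast_pred hN]; ring) (by rw [hd1]; push_cast; ring)
        refine ⟨phi N a (0,1), phi_image_subset hF ha ⟨_, hfb, rfl⟩,
          phi N c (1,0), phi_image_subset hF hc ⟨_, hfd, rfl⟩, ?_, ?_⟩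
        · simp only [phi, ha1', hc1']
          field_simp
          ring
        · simp only [phi]
          have : (a.1:ℝ) = (c.1:ℝ) + 1 := by exact_mod_cast hA
          rw [this]
          ring

end EdgeV
section Core

variable {N : ℕ} {D : Finset (ℕ × ℕ)} {F : Set (ℝ × ℝ)} {Q : ℕ → Set (ℝ × ℝ)}

lemma coord_hi (hN : 2 ≤ N) {a b : ℕ} (hDa : a < N) (hDb : b < N)
    (h : (1:ℝ) ≤ (((a*N+b : ℕ):ℝ) + 1)/(N:ℝ)^2) : a = N-1 ∧ b = N-1 := by
  have h0 : (0:ℝ) < N := Npos hN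
  have hp2 : (0:ℝ) < (N:ℝ)^2 := by positivity
  rw [le_div_iff₀ hp2] at h
  have hr : (N:ℝ)*N ≤ (a:ℝ)*N + b + 1 := by push_cast at h ⊢; nlinarith
  have hz : (N:ℤ)*N ≤ (a:ℤ)*N + b + 1 := by exact_mod_cast hr
  have hNZ : (2:ℤ) ≤ N := by exact_mod_cast hN
  have hres := digits_hi hNZ (by omega : (a:ℤ) ≤ (N:ℤ)-1) (by omega : (b:ℤ) ≤ (N:ℤ)-1) hz
  omega

lemma coord_lo (hN : 2 ≤ N) {a b : ℕ}
    (h : (((a*N+b : ℕ):ℝ))/(N:ℝ)^2 ≤ 0) : a = 0 ∧ b = 0 := by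
  have h0 : (0:ℝ) < N := Npos hN
  have hp2 : (0:ℝ) < (N:ℝ)^2 := by positivity
  rw [div_le_iff₀ hp2] at h
  have hr : ((a*N+b : ℕ):ℝ) ≤ 0 := by nlinarith
  have hz : (a*N+b : ℕ) = 0 := by
    have := le_antisymm hr (Nat.cast_nonneg _)
    exact_mod_cast this
  have hb : b = 0 := by omega
  have haN : a*N = 0 := by omega
  rcases Nat.mul_eq_zero.mp haN with h' | h'
  · exact ⟨h', hb⟩
  · omega

lemma near_of_overlap (hN : 2 ≤ N) {B C : ℕ} {y z : ℝ}
    (hy : ((B:ℝ))/(N:ℝ)^2 ≤ y) (hz : z ≤ ((C:ℝ)+1)/(N:ℝ)^2) (hyz : y ≤ z) :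
    (B:ℤ) ≤ (C:ℤ) + 1 := by
  have h0 : (0:ℝ) < N := Npos hN
  have hp2 : (0:ℝ) < (N:ℝ)^2 := by positivity
  have h1 : ((B:ℝ))/(N:ℝ)^2 ≤ ((C:ℝ)+1)/(N:ℝ)^2 := le_trans hy (le_trans hyz hz)
  rw [div_le_div_iff_of_pos_right hp2] at h1
  exact_mod_cast h1

end Core
section Core2

variable {N : ℕ} {D : Finset (ℕ × ℕ)} {F : Set (ℝ × ℝ)} {Q : ℕ → Set (ℝ × ℝ)}

lemma core_lex (hN : 2 ≤ N) (hD : ∀ i ∈ D, i.1 < N ∧ i.2 < N) (hF : IsAttractor N D F)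
    (hQ0 : Q 0 = Set.Icc ((0:ℝ),(0:ℝ)) (1,1))
    (hQ : ∀ n, Q (n+1) = ⋃ i ∈ D, phi N i '' Q n)
    {i j : ℕ × ℕ} (hi : i ∈ D) (hj : j ∈ D)
    {p q : ℝ × ℝ} (hp : p ∈ Q 2) (hq : q ∈ Q 2)
    (e1 : p.1 + (i.1:ℝ) = q.1 + (j.1:ℝ)) (e2 : p.2 + (i.2:ℝ) = q.2 + (j.2:ℝ))
    (hlex : i.1 < j.1 ∨ (i.1 = j.1 ∧ i.2 ≤ j.2)) :
    ∃ p' ∈ F, ∃ q' ∈ F, p'.1 + (i.1:ℝ) = q'.1 + (j.1:ℝ) ∧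
      p'.2 + (i.2:ℝ) = q'.2 + (j.2:ℝ) := by
  have h0 : (0:ℝ) < N := Npos hN
  have hIcc := Q_subset_Icc hN hD hQ0 hQ 2
  have hpI := hIcc hp
  have hqI := hIcc hq
  simp only [Set.mem_Icc, Prod.le_def] at hpI hqI
  obtain ⟨⟨hp1, hp2⟩, hp3, hp4⟩ := hpI
  obtain ⟨⟨hq1, hq2⟩, hq3, hq4⟩ := hqI
  -- integer bounds on digit differences
  have hd1a : (j.1:ℤ) ≤ (i.1:ℤ) + 1 := by
    have : (j.1:ℝ) ≤ (i.1:ℝ) + 1 := by linarith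
    exact_mod_cast this
  have hd2a : (j.2:ℤ) ≤ (i.2:ℤ) + 1 := by
    have : (j.2:ℝ) ≤ (i.2:ℝ) + 1 := by linarith
    exact_mod_cast this
  have hd2b : (i.2:ℤ) ≤ (j.2:ℤ) + 1 := by
    have : (i.2:ℝ) ≤ (j.2:ℝ) + 1 := by linarith
    exact_mod_cast this
  rcases hlex with hA | ⟨hB1, hB2⟩
  · -- i.1 < j.1, so j.1 = i.1 + 1
    have hj1 : j.1 = i.1 + 1 := by omega
    have hj1R : (j.1:ℝ) = (i.1:ℝ) + 1 := by exact_mod_cast hj1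
    have hpx : p.1 = 1 := by linarith
    have hqx : q.1 = 0 := by linarith
    obtain ⟨a, ha, b, hb, hIp1, hIp2, hIp3, hIp4⟩ := extract_gen hN hQ0 hQ hp
    obtain ⟨c, hc, d, hd, hIq1, hIq2, hIq3, hIq4⟩ := extract_gen hN hQ0 hQ hq
    have hax : a.1 = N-1 ∧ b.1 = N-1 :=
      coord_hi hN (hD a ha).1 (hD b hb).1 (by rw [hpx] at hIp2; exact hIp2)
    have hcx : c.1 = 0 ∧ d.1 = 0 :=
      coord_lo hN (by rw [hqx] at hIq1; exact hIq1)
    rcases Nat.lt_trichotomy i.2 j.2 with h2 | h2 | h2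
    · -- j.2 = i.2 + 1 : corner ↗
      have hj2 : j.2 = i.2 + 1 := by omega
      have hj2R : (j.2:ℝ) = (i.2:ℝ) + 1 := by exact_mod_cast hj2
      have hpy : p.2 = 1 := by linarith
      have hqy : q.2 = 0 := by linarith
      have hay : a.2 = N-1 ∧ b.2 = N-1 :=
        coord_hi hN (hD a ha).2 (hD b hb).2 (by rw [hpy] at hIp4; exact hIp4)
      have hcy : c.2 = 0 ∧ d.2 = 0 :=
        coord_lo hN (by rw [hqy] at hIq3; exact hIq3)
      have hfa : ((1:ℝ), (1:ℝ)) ∈ F :=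
        fix_mem' hN hF ha (by rw [hax.1, cast_pred hN]; ring) (by rw [hay.1, cast_pred hN]; ring)
      have hfc : ((0:ℝ), (0:ℝ)) ∈ F :=
        fix_mem' hN hF hc (by rw [hcx.1]; push_cast; ring) (by rw [hcy.1]; push_cast; ring)
      refine ⟨(1,1), hfa, (0,0), hfc, ?_, ?_⟩
      · show (1:ℝ) + (i.1:ℝ) = 0 + (j.1:ℝ); rw [hj1R]; ring
      · show (1:ℝ) + (i.2:ℝ) = 0 + (j.2:ℝ); rw [hj2R]; ring
    · -- same height : horizontal edge
      have hj2R : (j.2:ℝ) = (i.2:ℝ) := by exact_mod_cast h2.symm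
      have hpq2 : p.2 = q.2 := by rw [hj2R] at e2; linarith
      have hn1 : ((a.2*N+b.2 : ℕ):ℤ) ≤ ((c.2*N+d.2 : ℕ):ℤ) + 1 :=
        near_of_overlap hN hIp3 hIq4 (le_of_eq hpq2)
      have hn2 : ((c.2*N+d.2 : ℕ):ℤ) ≤ ((a.2*N+b.2 : ℕ):ℤ) + 1 :=
        near_of_overlap hN hIq3 hIp4 (le_of_eq hpq2.symm)
      obtain ⟨p', hp', q', hq', g1, g2⟩ := edge_h hN hF ha hb hc hd
        (hD a ha).2 (hD b hb).2 (hD c hc).2 (hD d hd).2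
        hax.1 hax.2 hcx.1 hcx.2 hn1 hn2
      exact ⟨p', hp', q', hq', by rw [hj1R]; linarith, by rw [hj2R]; linarith⟩
    · -- i.2 = j.2 + 1 : corner ↘
      have hj2 : i.2 = j.2 + 1 := by omega
      have hj2R : (i.2:ℝ) = (j.2:ℝ) + 1 := by exact_mod_cast hj2
      have hpy : p.2 = 0 := by linarith
      have hqy : q.2 = 1 := by linarith
      have hay : a.2 = 0 ∧ b.2 = 0 :=
        coord_lo hN (by rw [hpy] at hIp3; exact hIp3)
      have hcy : c.2 = N-1 ∧ d.2 = N-1 :=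
        coord_hi hN (hD c hc).2 (hD d hd).2 (by rw [hqy] at hIq4; exact hIq4)
      have hfa : ((1:ℝ), (0:ℝ)) ∈ F :=
        fix_mem' hN hF ha (by rw [hax.1, cast_pred hN]; ring) (by rw [hay.1]; push_cast; ring)
      have hfc : ((0:ℝ), (1:ℝ)) ∈ F :=
        fix_mem' hN hF hc (by rw [hcx.1]; push_cast; ring) (by rw [hcy.1, cast_pred hN]; ring)
      refine ⟨(1,0), hfa, (0,1), hfc, ?_, ?_⟩
      · show (1:ℝ) + (i.1:ℝ) = 0 + (j.1:ℝ); rw [hj1R]; ring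
      · show (0:ℝ) + (i.2:ℝ) = 1 + (j.2:ℝ); rw [hj2R]; ring
  · -- i.1 = j.1
    have hj1R : (j.1:ℝ) = (i.1:ℝ) := by exact_mod_cast hB1.symm
    have hpq1 : p.1 = q.1 := by rw [hj1R] at e1; linarith
    rcases Nat.lt_or_ge i.2 j.2 with h2 | h2
    · -- vertical edge
      have hj2 : j.2 = i.2 + 1 := by omega
      have hj2R : (j.2:ℝ) = (i.2:ℝ) + 1 := by exact_mod_cast hj2
      have hpy : p.2 = 1 := by linarith
      have hqy : q.2 = 0 := by linarith
      obtain ⟨a, ha, b, hb, hIp1, hIp2, hIp3, hIp4⟩ := extract_gen hN hQ0 hQ hp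
      obtain ⟨c, hc, d, hd, hIq1, hIq2, hIq3, hIq4⟩ := extract_gen hN hQ0 hQ hq
      have hay : a.2 = N-1 ∧ b.2 = N-1 :=
        coord_hi hN (hD a ha).2 (hD b hb).2 (by rw [hpy] at hIp4; exact hIp4)
      have hcy : c.2 = 0 ∧ d.2 = 0 :=
        coord_lo hN (by rw [hqy] at hIq3; exact hIq3)
      have hn1 : ((a.1*N+b.1 : ℕ):ℤ) ≤ ((c.1*N+d.1 : ℕ):ℤ) + 1 :=
        near_of_overlap hN hIp1 hIq2 (le_of_eq hpq1)
      have hn2 : ((c.1*N+d.1 : ℕ):ℤ) ≤ ((a.1*N+b.1 : ℕ):ℤ) + 1 :=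
        near_of_overlap hN hIq1 hIp2 (le_of_eq hpq1.symm)
      obtain ⟨p', hp', q', hq', g1, g2⟩ := edge_v hN hF ha hb hc hd
        (hD a ha).1 (hD b hb).1 (hD c hc).1 (hD d hd).1
        hay.1 hay.2 hcy.1 hcy.2 hn1 hn2
      exact ⟨p', hp', q', hq', by rw [hj1R]; linarith, by rw [hj2R]; linarith⟩
    · -- i = j
      have hj2 : i.2 = j.2 := by omega
      obtain ⟨x0, hx0⟩ := hF.1
      refine ⟨x0, hx0, x0, hx0, ?_, ?_⟩
      · rw [hj1R]
      · rw [(by exact_mod_cast hj2 : (i.2:ℝ) = (j.2:ℝ))]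

end Core2
section Contact

variable {N : ℕ} {D : Finset (ℕ × ℕ)} {F : Set (ℝ × ℝ)} {Q : ℕ → Set (ℝ × ℝ)}

lemma contact_upgrade (hN : 2 ≤ N) (hD : ∀ i ∈ D, i.1 < N ∧ i.2 < N)
    (hF : IsAttractor N D F)
    (hQ0 : Q 0 = Set.Icc ((0:ℝ),(0:ℝ)) (1,1))
    (hQ : ∀ n, Q (n+1) = ⋃ i ∈ D, phi N i '' Q n)
    {i j : ℕ × ℕ} (hi : i ∈ D) (hj : j ∈ D)
    (h : ((phi N i '' Q 2) ∩ (phi N j '' Q 2)).Nonempty) :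
    ((phi N i '' F) ∩ (phi N j '' F)).Nonempty := by
  have h0 : (0:ℝ) < N := Npos hN
  have hN0 : (N:ℝ) ≠ 0 := ne_of_gt h0
  obtain ⟨x, ⟨p, hp, hpx⟩, q, hq, hqx⟩ := h
  have hco := hpx.trans hqx.symm
  have e1 : p.1 + (i.1:ℝ) = q.1 + (j.1:ℝ) := by
    have h' := congrArg Prod.fst hco
    simp only [phi] at h'
    field_simp at h'
    linarith
  have e2 : p.2 + (i.2:ℝ) = q.2 + (j.2:ℝ) := by
    have h' := congrArg Prod.snd hco
    simp only [phi] at h'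
    field_simp at h'
    linarith
  by_cases hc : i.1 < j.1 ∨ (i.1 = j.1 ∧ i.2 ≤ j.2)
  · obtain ⟨p', hp', q', hq', f1, f2⟩ :=
      core_lex hN hD hF hQ0 hQ hi hj hp hq e1 e2 hc
    refine ⟨phi N i p', ⟨p', hp', rfl⟩, q', hq', ?_⟩
    apply Prod.ext <;> simp only [phi]
    · rw [f1]
    · rw [f2]
  · have hc' : j.1 < i.1 ∨ (j.1 = i.1 ∧ j.2 ≤ i.2) := by omega
    obtain ⟨p', hp', q', hq', f1, f2⟩ :=
      core_lex hN hD hF hQ0 hQ hj hi hq hp e1.symm e2.symm hc'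
    refine ⟨phi N j p', ⟨q', hq', ?_⟩, p', hp', rfl⟩
    apply Prod.ext <;> simp only [phi]
    · rw [f1]
    · rw [f2]

lemma Q_compact (hN : 2 ≤ N)
    (hQ0 : Q 0 = Set.Icc ((0:ℝ),(0:ℝ)) (1,1))
    (hQ : ∀ n, Q (n+1) = ⋃ i ∈ D, phi N i '' Q n) :
    ∀ n, IsCompact (Q n) := by
  intro n
  induction n with
  | zero => rw [hQ0]; exact isCompact_Icc
  | succ n ih =>
    rw [hQ n]
    exact D.finite_toSet.isCompact_biUnion fun i _ => ih.image (phi_cont N i)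

/-- From connectedness of `Q 3`, the level-1 Hata graph (with F-contacts) is connected. -/
lemma graph_conn (hN : 2 ≤ N) (hD : ∀ i ∈ D, i.1 < N ∧ i.2 < N)
    (hF : IsAttractor N D F)
    (hQ0 : Q 0 = Set.Icc ((0:ℝ),(0:ℝ)) (1,1))
    (hQ : ∀ n, Q (n+1) = ⋃ i ∈ D, phi N i '' Q n)
    (hQ3 : IsConnected (Q 3)) {i j : ℕ × ℕ} (hi : i ∈ D) (hj : j ∈ D) :
    Relation.ReflTransGen
      (fun u v : ℕ × ℕ => u ∈ D ∧ v ∈ D ∧ ((phi N u '' F) ∩ (phi N v '' F)).Nonempty) i j := by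
  set r' : ℕ × ℕ → ℕ × ℕ → Prop :=
    fun u v => u ∈ D ∧ v ∈ D ∧ ((phi N u '' Q 2) ∩ (phi N v '' Q 2)).Nonempty with hr'
  suffices hs : Relation.ReflTransGen r' i j by
    exact Relation.ReflTransGen.mono (fun u v huv => ⟨huv.1, huv.2.1,
      contact_upgrade hN hD hF hQ0 hQ huv.1 huv.2.1 huv.2.2⟩) _ _ hs
  have hQ2c : IsCompact (Q 2) := Q_compact hN hQ0 hQ 2
  have hFQ2 : F ⊆ Q 2 := F_subset_Q hN hD hF hQ0 hQ 2
  have hQ2ne : (Q 2).Nonempty := hF.1.mono hFQ2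
  have hQ32 : Q 3 = ⋃ u ∈ D, phi N u '' Q 2 := hQ 2
  classical
  set T : Finset (ℕ × ℕ) := D.filter (fun u => Relation.ReflTransGen r' i u) with hT
  have hiT : i ∈ T := by
    rw [hT, Finset.mem_filter]
    exact ⟨hi, Relation.ReflTransGen.refl⟩
  set U : Set (ℝ × ℝ) := ⋃ u ∈ T, phi N u '' Q 2 with hU
  set V : Set (ℝ × ℝ) := ⋃ u ∈ (D \ T), phi N u '' Q 2 with hV
  have hUc : IsClosed U :=
    (T.finite_toSet.isCompact_biUnion fun u _ => hQ2c.image (phi_cont N u)).isClosed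
  have hVc : IsClosed V :=
    ((D \ T).finite_toSet.isCompact_biUnion fun u _ => hQ2c.image (phi_cont N u)).isClosed
  have hcover : Q 3 ⊆ U ∪ V := by
    rw [hQ32]
    intro z hz
    simp only [Set.mem_iUnion] at hz
    obtain ⟨u, hu, hzu⟩ := hz
    by_cases huT : u ∈ T
    · exact Or.inl (Set.mem_biUnion huT hzu)
    · exact Or.inr (Set.mem_biUnion (Finset.mem_sdiff.mpr ⟨hu, huT⟩) hzu)
  have hUsub : U ⊆ Q 3 := by
    rw [hQ32, hU]
    refine Set.iUnion₂_subset fun u hu => ?_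
    intro z hz
    exact Set.mem_biUnion (Finset.mem_of_mem_filter u hu) hz
  have hVsub : V ⊆ Q 3 := by
    rw [hQ32, hV]
    refine Set.iUnion₂_subset fun u hu => ?_
    intro z hz
    exact Set.mem_biUnion (Finset.mem_sdiff.mp hu).1 hz
  have hUne : (Q 3 ∩ U).Nonempty := by
    obtain ⟨w, hw⟩ := hQ2ne
    have : phi N i w ∈ U := Set.mem_biUnion hiT ⟨w, hw, rfl⟩
    exact ⟨phi N i w, hUsub this, this⟩
  have hjT : j ∈ T := by
    by_contra hjT
    have hVne : (Q 3 ∩ V).Nonempty := by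
      obtain ⟨w, hw⟩ := hQ2ne
      have : phi N j w ∈ V :=
        Set.mem_biUnion (Finset.mem_sdiff.mpr ⟨hj, hjT⟩) ⟨w, hw, rfl⟩
      exact ⟨phi N j w, hVsub this, this⟩
    obtain ⟨z, _, hzU, hzV⟩ := isPreconnected_closed_iff.mp hQ3.2 U V hUc hVc hcover hUne hVne
    simp only [hU, hV, Set.mem_iUnion] at hzU hzV
    obtain ⟨u, huT, hzu⟩ := hzU
    obtain ⟨v, hvDT, hzv⟩ := hzV
    obtain ⟨hvD, hvT⟩ := Finset.mem_sdiff.mp hvDT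
    have hredge : r' u v := ⟨Finset.mem_of_mem_filter u huT, hvD, ⟨z, hzu, hzv⟩⟩
    have : Relation.ReflTransGen r' i v :=
      Relation.ReflTransGen.tail (Finset.mem_filter.mp huT).2 hredge
    exact hvT (Finset.mem_filter.mpr ⟨hvD, this⟩)
  exact (Finset.mem_filter.mp hjT).2

end Contact
section WordsSec

variable {N : ℕ} {D : Finset (ℕ × ℕ)} {F : Set (ℝ × ℝ)}

lemma phiW_cons (a : ℕ × ℕ) (l : List (ℕ × ℕ)) (x : ℝ × ℝ) :
    phiW N (a :: l) x = phi N a (phiW N l x) := rfl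

lemma phiW_cons_image (a : ℕ × ℕ) (l : List (ℕ × ℕ)) (S : Set (ℝ × ℝ)) :
    phiW N (a :: l) '' S = phi N a '' (phiW N l '' S) := by
  rw [show phiW N (a::l) = phi N a ∘ phiW N l from rfl, Set.image_comp]

lemma phiW_image_subset_F (hF : IsAttractor N D F) :
    ∀ l : List (ℕ × ℕ), (∀ a ∈ l, a ∈ D) → phiW N l '' F ⊆ F := by
  intro l
  induction l with
  | nil => intro _; simp [phiW]
  | cons a l ih =>
    intro hmem
    rw [phiW_cons_image]
    refine subset_trans (Set.image_mono (ih fun b hb => hmem b (List.mem_cons_of_mem a hb))) ?_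
    exact phi_image_subset hF (hmem a List.mem_cons_self)

lemma F_iter (hF : IsAttractor N D F) :
    ∀ n, F = ⋃ l ∈ Words D n, phiW N l '' F := by
  intro n
  induction n with
  | zero =>
    apply Set.Subset.antisymm
    · intro x hx
      exact Set.mem_biUnion (show ([] : List (ℕ×ℕ)) ∈ Words D 0 from ⟨rfl, by simp⟩)
        ⟨x, hx, rfl⟩
    · intro x hx
      simp only [Set.mem_iUnion] at hx
      obtain ⟨l, hl, y, hy, rfl⟩ := hx
      have : l = [] := List.length_eq_zero_iff.mp hl.1
      subst this
      exact hy
  | succ n ih =>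
    apply Set.Subset.antisymm
    · intro x hx
      have hx' : x ∈ ⋃ i ∈ D, phi N i '' F := (le_of_eq hF.2.2) hx
      simp only [Set.mem_iUnion] at hx'
      obtain ⟨i, hi, y, hy, rfl⟩ := hx'
      have hy' : y ∈ ⋃ l ∈ Words D n, phiW N l '' F := (le_of_eq ih) hy
      simp only [Set.mem_iUnion] at hy'
      obtain ⟨l, hl, z, hz, rfl⟩ := hy'
      refine Set.mem_biUnion (show (i :: l) ∈ Words D (n+1) from ?_) ?_
      · refine ⟨by simp [hl.1], ?_⟩
        intro a ha
        rcases List.mem_cons.mp ha with rfl | ha'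
        · exact hi
        · exact hl.2 a ha'
      · exact ⟨z, hz, rfl⟩
    · intro x hx
      simp only [Set.mem_iUnion] at hx
      obtain ⟨l, hl, y, hy, rfl⟩ := hx
      exact phiW_image_subset_F hF l hl.2 ⟨y, hy, rfl⟩

lemma dist_phiW (hN : 2 ≤ N) :
    ∀ (l : List (ℕ × ℕ)) (p q : ℝ × ℝ),
      dist (phiW N l p) (phiW N l q) = dist p q / (N:ℝ)^l.length := by
  intro l
  induction l with
  | nil => intro p q; simp [phiW]
  | cons a l ih =>
    intro p q
    rw [phiW_cons, phiW_cons, dist_phi hN, ih, List.length_cons, div_div, ← pow_succ]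

/-- connectivity of the word graph at every level. -/
lemma conn_words (hF : IsAttractor N D F)
    (hgraph : ∀ i ∈ D, ∀ j ∈ D, Relation.ReflTransGen
      (fun u v : ℕ × ℕ => u ∈ D ∧ v ∈ D ∧ ((phi N u '' F) ∩ (phi N v '' F)).Nonempty) i j) :
    ∀ n, ∀ l ∈ Words D n, ∀ l' ∈ Words D n,
      Relation.ReflTransGen
        (fun t t' => t ∈ Words D n ∧ t' ∈ Words D n ∧
          ((phiW N t '' F) ∩ (phiW N t' '' F)).Nonempty) l l' := by
  intro n
  induction n with
  | zero =>
    intro l hl l' hl'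
    have h1 : l = [] := List.length_eq_zero_iff.mp hl.1
    have h2 : l' = [] := List.length_eq_zero_iff.mp hl'.1
    subst h1; subst h2
    exact Relation.ReflTransGen.refl
  | succ n ih =>
    -- lifting within one branch
    have hconsW : ∀ (k : ℕ × ℕ), k ∈ D → ∀ t, t ∈ Words D n → (k :: t) ∈ Words D (n+1) := by
      intro k hk t ht
      refine ⟨by simp [ht.1], ?_⟩
      intro a ha
      rcases List.mem_cons.mp ha with rfl | ha'
      · exact hk
      · exact ht.2 a ha'
    have hlift : ∀ (k : ℕ × ℕ), k ∈ D → ∀ t₁ t₂,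
        Relation.ReflTransGen (fun t t' => t ∈ Words D n ∧ t' ∈ Words D n ∧
          ((phiW N t '' F) ∩ (phiW N t' '' F)).Nonempty) t₁ t₂ →
        Relation.ReflTransGen (fun t t' => t ∈ Words D (n+1) ∧ t' ∈ Words D (n+1) ∧
          ((phiW N t '' F) ∩ (phiW N t' '' F)).Nonempty) (k :: t₁) (k :: t₂) := by
      intro k hk t₁ t₂ hch
      refine Relation.ReflTransGen.lift (fun t => k :: t) ?_ _ _ hch
      rintro a b ⟨haW, hbW, x, hx1, hx2⟩
      refine ⟨hconsW k hk a haW, hconsW k hk b hbW, phi N k x, ?_, ?_⟩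
      · rw [phiW_cons_image]; exact ⟨x, hx1, rfl⟩
      · rw [phiW_cons_image]; exact ⟨x, hx2, rfl⟩
    -- bridging along a level-1 edge
    have hbridge : ∀ u v : ℕ × ℕ, u ∈ D → v ∈ D →
        ((phi N u '' F) ∩ (phi N v '' F)).Nonempty →
        ∃ s, s ∈ Words D n ∧ ∃ s', s' ∈ Words D n ∧
          ((phiW N (u :: s) '' F) ∩ (phiW N (v :: s') '' F)).Nonempty := by
      intro u v hu hv ⟨x, ⟨y, hy, hyx⟩, z, hz, hzx⟩
      have hy' : y ∈ ⋃ l ∈ Words D n, phiW N l '' F := (le_of_eq (F_iter hF n)) hy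
      have hz' : z ∈ ⋃ l ∈ Words D n, phiW N l '' F := (le_of_eq (F_iter hF n)) hz
      simp only [Set.mem_iUnion] at hy' hz'
      obtain ⟨s, hs, w, hw, hws⟩ := hy'
      obtain ⟨s', hs', w', hw', hws'⟩ := hz'
      refine ⟨s, hs, s', hs', x, ?_, ?_⟩
      · rw [phiW_cons_image]
        exact ⟨y, ⟨w, hw, hws⟩, hyx⟩
      · rw [phiW_cons_image]
        exact ⟨z, ⟨w', hw', hws'⟩, hzx⟩
    intro l hl l' hl'
    obtain ⟨i, t, rfl⟩ : ∃ i t, l = i :: t := by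
      cases l with
      | nil => exact absurd hl.1 (by simp)
      | cons i t => exact ⟨i, t, rfl⟩
    obtain ⟨j, t', rfl⟩ : ∃ j t', l' = j :: t' := by
      cases l' with
      | nil => exact absurd hl'.1 (by simp)
      | cons j t' => exact ⟨j, t', rfl⟩
    have hi : i ∈ D := hl.2 i List.mem_cons_self
    have hj : j ∈ D := hl'.2 j List.mem_cons_self
    have ht : t ∈ Words D n := ⟨by have := hl.1; simpa using this, fun a ha => hl.2 a (List.mem_cons_of_mem i ha)⟩
    have ht' : t' ∈ Words D n := ⟨by have := hl'.1; simpa using this, fun a ha => hl'.2 a (List.mem_cons_of_mem j ha)⟩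
    have key : ∀ jj : ℕ × ℕ, Relation.ReflTransGen
        (fun u v : ℕ × ℕ => u ∈ D ∧ v ∈ D ∧ ((phi N u '' F) ∩ (phi N v '' F)).Nonempty) i jj →
        ∀ t₂, t₂ ∈ Words D n → Relation.ReflTransGen
          (fun t t' => t ∈ Words D (n+1) ∧ t' ∈ Words D (n+1) ∧
            ((phiW N t '' F) ∩ (phiW N t' '' F)).Nonempty) (i :: t) (jj :: t₂) := by
      intro jj h
      induction h with
      | refl =>
        intro t₂ ht₂
        exact hlift i hi t t₂ (ih t ht t₂ ht₂)
      | @tail b c hab hbc ihh =>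
        intro t₂ ht₂
        obtain ⟨s, hs, s', hs', hne⟩ := hbridge b c hbc.1 hbc.2.1 hbc.2.2
        have c1 := ihh s hs
        have c2 : Relation.ReflTransGen
            (fun t t' => t ∈ Words D (n+1) ∧ t' ∈ Words D (n+1) ∧
              ((phiW N t '' F) ∩ (phiW N t' '' F)).Nonempty) (b :: s) (c :: s') :=
          Relation.ReflTransGen.single ⟨hconsW b hbc.1 s hs, hconsW c hbc.2.1 s' hs', hne⟩
        have c3 := hlift c hbc.2.1 s' t₂ (ih s' hs' t₂ ht₂)
        exact (c1.trans c2).trans c3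
    exact key j (hgraph i hi j hj) t' ht'

end WordsSec
section FConn

variable {N : ℕ} {D : Finset (ℕ × ℕ)} {F : Set (ℝ × ℝ)}

lemma F_preconn (hN : 2 ≤ N) (hD : ∀ i ∈ D, i.1 < N ∧ i.2 < N)
    (hF : IsAttractor N D F)
    (hgraph : ∀ i ∈ D, ∀ j ∈ D, Relation.ReflTransGen
      (fun u v : ℕ × ℕ => u ∈ D ∧ v ∈ D ∧ ((phi N u '' F) ∩ (phi N v '' F)).Nonempty) i j) :
    IsPreconnected F := by
  have h0 : (0:ℝ) < N := Npos hN
  rw [isPreconnected_closed_iff]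
  intro t t' hct hct' hcover hne1 hne2
  by_contra hempty
  rw [Set.not_nonempty_iff_eq_empty] at hempty
  set U : Set (ℝ × ℝ) := F ∩ t with hUdef
  set V : Set (ℝ × ℝ) := F ∩ t' with hVdef
  have hdisj : Disjoint U V := by
    rw [Set.disjoint_left]
    intro w hwU hwV
    have : w ∈ F ∩ (t ∩ t') := ⟨hwU.1, hwU.2, hwV.2⟩
    rw [hempty] at this
    exact this
  have hUcomp : IsCompact U := hF.2.1.inter_right hct
  have hVcomp : IsCompact V := hF.2.1.inter_right hct'
  obtain ⟨δ, hδ, hthick⟩ := hdisj.exists_thickenings hUcomp hVcomp.isClosed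
  have hsep : ∀ u ∈ U, ∀ v ∈ V, δ ≤ dist u v := by
    intro u hu v hv
    by_contra hlt
    push_neg at hlt
    have h1 : v ∈ Metric.thickening δ U :=
      Metric.mem_thickening_iff.mpr ⟨u, hu, by rwa [dist_comm]⟩
    have h2 : v ∈ Metric.thickening δ V :=
      Metric.mem_thickening_iff.mpr ⟨v, hv, by simpa using hδ⟩
    exact (Set.disjoint_left.mp hthick h1) h2
  obtain ⟨n, hn⟩ := pow_unbounded_of_one_lt (1/δ) (Ngt1 hN)
  have hpow : (1:ℝ)/(N:ℝ)^n < δ := by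
    have hNn : (0:ℝ) < (N:ℝ)^n := pow_pos h0 n
    rw [div_lt_iff₀ hδ] at hn
    rw [div_lt_iff₀ hNn]
    nlinarith
  have hFIcc := F_subset_Icc hN hD hF
  have hdiam : ∀ x ∈ F, ∀ y ∈ F, dist x y ≤ 1 := by
    intro x hx y hy
    have hxI := hFIcc hx
    have hyI := hFIcc hy
    simp only [Set.mem_Icc, Prod.le_def] at hxI hyI
    obtain ⟨⟨a1, a2⟩, a3, a4⟩ := hxI
    obtain ⟨⟨b1, b2⟩, b3, b4⟩ := hyI
    rw [Prod.dist_eq]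
    apply max_le
    · rw [Real.dist_eq, abs_le]; constructor <;> linarith
    · rw [Real.dist_eq, abs_le]; constructor <;> linarith
  have hpiece : ∀ l ∈ Words D n, ∀ x ∈ phiW N l '' F, ∀ y ∈ phiW N l '' F,
      dist x y < δ := by
    rintro l hl x ⟨x0, hx0, rfl⟩ y ⟨y0, hy0, rfl⟩
    rw [dist_phiW hN, hl.1]
    have h1 : dist x0 y0 ≤ 1 := hdiam _ hx0 _ hy0
    have h2 : dist x0 y0 / (N:ℝ)^n ≤ 1/(N:ℝ)^n := by gcongr
    linarith
  have hUV : ∀ w ∈ F, w ∈ U ∨ w ∈ V := by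
    intro w hw
    rcases hcover hw with h | h
    · exact Or.inl ⟨hw, h⟩
    · exact Or.inr ⟨hw, h⟩
  have hdich : ∀ l ∈ Words D n, phiW N l '' F ⊆ U ∨ phiW N l '' F ⊆ V := by
    intro l hl
    by_contra hcon
    push_neg at hcon
    obtain ⟨h1, h2⟩ := hcon
    rw [Set.not_subset] at h1 h2
    obtain ⟨w1, hw1, hw1U⟩ := h1
    obtain ⟨w2, hw2, hw2V⟩ := h2
    have hw1F : w1 ∈ F := phiW_image_subset_F hF l hl.2 hw1
    have hw2F : w2 ∈ F := phiW_image_subset_F hF l hl.2 hw2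
    have hw1V : w1 ∈ V := (hUV w1 hw1F).resolve_left hw1U
    have hw2U : w2 ∈ U := (hUV w2 hw2F).resolve_right hw2V
    have := hsep w2 hw2U w1 hw1V
    have := hpiece l hl w2 hw2 w1 hw1
    linarith
  have hprop : ∀ l l', Relation.ReflTransGen
      (fun a b => a ∈ Words D n ∧ b ∈ Words D n ∧
        ((phiW N a '' F) ∩ (phiW N b '' F)).Nonempty) l l' →
      phiW N l '' F ⊆ U → phiW N l' '' F ⊆ U := by
    intro l l' h
    induction h with
    | refl => exact id
    | @tail b c hab hbc ihh =>
      intro hlU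
      have hbU := ihh hlU
      obtain ⟨x, hxb, hxc⟩ := hbc.2.2
      rcases hdich c hbc.2.1 with h | h
      · exact h
      · exact absurd (Set.disjoint_left.mp hdisj (hbU hxb)) (not_not_intro (h hxc))
  obtain ⟨y, hyF, hyt⟩ := hne1
  obtain ⟨z, hzF, hzt'⟩ := hne2
  have hy' : y ∈ ⋃ l ∈ Words D n, phiW N l '' F := (le_of_eq (F_iter hF n)) hyF
  have hz' : z ∈ ⋃ l ∈ Words D n, phiW N l '' F := (le_of_eq (F_iter hF n)) hzF
  simp only [Set.mem_iUnion] at hy' hz'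
  obtain ⟨ly, hly, hyp⟩ := hy'
  obtain ⟨lz, hlz, hzp⟩ := hz'
  have hyU : y ∈ U := ⟨hyF, hyt⟩
  have hzV : z ∈ V := ⟨hzF, hzt'⟩
  have hlyU : phiW N ly '' F ⊆ U := by
    rcases hdich ly hly with h | h
    · exact h
    · exact absurd (Set.disjoint_left.mp hdisj hyU) (not_not_intro (h hyp))
  have hlzU : phiW N lz '' F ⊆ U :=
    hprop ly lz (conn_words hF hgraph n ly hly lz hlz) hlyU
  exact (Set.disjoint_left.mp hdisj (hlzU hzp)) hzV

end FConn
theorem stmt2 (N : ℕ) (D : Finset (ℕ × ℕ)) (hND : GoodDigits N D)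
    (F : Set (ℝ × ℝ)) (hF : IsAttractor N D F)
    (Q : ℕ → Set (ℝ × ℝ))
    (hQ0 : Q 0 = Set.Icc ((0 : ℝ), (0 : ℝ)) (1, 1))
    (hQ : ∀ n, Q (n + 1) = ⋃ i ∈ D, phi N i '' Q n) :
    IsConnected F ↔ IsConnected (Q 3) := by
  obtain ⟨hN, hD, hcard, _⟩ := hND
  constructor
  · intro hFc
    exact Q_connected_of_F hN hD hF hFc hQ0 hQ 3
  · intro hQ3
    refine ⟨hF.1, ?_⟩
    apply F_preconn hN hD hF
    intro i hi j hj
    exact graph_conn hN hD hF hQ0 hQ hQ3 hi hj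
end

section
/- Let F = F(N,D) be a generalized Sierpiński carpet and let i, i' ∈ D with i − i' = (1,1). Then the following are equivalent: (1) φ_i(F) ∩ φ_{i'}(F) ≠ ∅; (2) φ_i(Q₁) ∩ φ_{i'}(Q₁) ≠ ∅; (3) both (0,0) and (N−1,N−1) belong to D. -/
open Set Topology

/-! ### Auxiliary lemmas -/

open Filter

lemma coord_bound {N : ℕ} {D : Finset (ℕ × ℕ)} (hN : 2 ≤ N)
    {F : Set (ℝ × ℝ)} (hF : IsAttractor N D F)
    (f : ℝ × ℝ → ℝ) (hfc : Continuous f) (g : ℕ × ℕ → ℕ)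
    (hfg : ∀ (j : ℕ × ℕ) (p : ℝ × ℝ), f (phi N j p) = (f p + (g j : ℝ)) / N)
    (hgb : ∀ j ∈ D, g j < N) :
    ∀ x ∈ F, 0 ≤ f x ∧ f x ≤ 1 := by
  obtain ⟨hne, hcomp, heq⟩ := hF
  have hN1 : (1:ℝ) < N := by exact_mod_cast hN
  have hN0 : (0:ℝ) < N := by linarith
  have hK : IsCompact (f '' F) := hcomp.image hfc
  have hKne : (f '' F).Nonempty := hne.image f
  have hbdd : BddAbove (f '' F) := hK.bddAbove
  have hbdd' : BddBelow (f '' F) := hK.bddBelow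
  have hub : sSup (f '' F) ≤ 1 := by
    obtain ⟨x, hx, hxm⟩ := hK.sSup_mem hKne
    rw [heq] at hx
    simp only [Set.mem_iUnion] at hx
    obtain ⟨j, hj, y, hy, hyx⟩ := hx
    have h1 : f y ≤ sSup (f '' F) := le_csSup hbdd ⟨y, hy, rfl⟩
    have h2 : (g j : ℝ) + 1 ≤ (N : ℝ) := by exact_mod_cast hgb j hj
    have h3 : sSup (f '' F) * N ≤ sSup (f '' F) + ((N:ℝ) - 1) := by
      have h4 : sSup (f '' F) = (f y + (g j : ℝ)) / N := by rw [← hxm, ← hyx, hfg]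
      rw [h4, div_mul_cancel₀ _ (ne_of_gt hN0)]
      linarith
    nlinarith
  have hlb : 0 ≤ sInf (f '' F) := by
    obtain ⟨x, hx, hxm⟩ := hK.sInf_mem hKne
    rw [heq] at hx
    simp only [Set.mem_iUnion] at hx
    obtain ⟨j, hj, y, hy, hyx⟩ := hx
    have h1 : sInf (f '' F) ≤ f y := csInf_le hbdd' ⟨y, hy, rfl⟩
    have h3 : sInf (f '' F) ≤ sInf (f '' F) * N := by
      have h4 : sInf (f '' F) = (f y + (g j : ℝ)) / N := by rw [← hxm, ← hyx, hfg]
      have h6 : sInf (f '' F) * N = f y + (g j : ℝ) := by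
        rw [h4, div_mul_cancel₀ _ (ne_of_gt hN0)]
      have h5 : (0:ℝ) ≤ (g j : ℝ) := by positivity
      linarith
    nlinarith
  intro x hx
  exact ⟨le_trans hlb (csInf_le hbdd' ⟨x, hx, rfl⟩),
    le_trans (le_csSup hbdd ⟨x, hx, rfl⟩) hub⟩

lemma attractor_subset {N : ℕ} {D : Finset (ℕ × ℕ)} (hN : 2 ≤ N)
    (hD : ∀ j ∈ D, j.1 < N ∧ j.2 < N)
    {F : Set (ℝ × ℝ)} (hF : IsAttractor N D F) :
    F ⊆ Set.Icc ((0 : ℝ), (0 : ℝ)) (1, 1) := by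
  intro x hx
  have h1 := coord_bound hN hF Prod.fst continuous_fst (fun j => j.1)
    (fun j p => rfl) (fun j hj => (hD j hj).1) x hx
  have h2 := coord_bound hN hF Prod.snd continuous_snd (fun j => j.2)
    (fun j p => rfl) (fun j hj => (hD j hj).2) x hx
  simp only [Set.mem_Icc, Prod.le_def]
  exact ⟨⟨h1.1, h2.1⟩, h1.2, h2.2⟩

lemma fix_mem_s3 {N : ℕ} {D : Finset (ℕ × ℕ)} (hN : 2 ≤ N)
    {F : Set (ℝ × ℝ)} (hF : IsAttractor N D F)
    {j : ℕ × ℕ} (hj : j ∈ D) {c : ℝ × ℝ} (hfix : phi N j c = c) : c ∈ F := by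
  obtain ⟨hne, hcomp, heq⟩ := hF
  obtain ⟨x, hx⟩ := hne
  have hN1 : (1:ℝ) < N := by exact_mod_cast hN
  have hN0 : (0:ℝ) < N := by linarith
  set s : ℕ → ℝ × ℝ := fun k =>
    (c.1 + (x.1 - c.1) / (N:ℝ)^k, c.2 + (x.2 - c.2) / (N:ℝ)^k) with hs
  have hfix1 : c.1 + (j.1:ℝ) = c.1 * N := by
    have := congrArg Prod.fst hfix
    simp only [phi] at this
    field_simp at this
    linarith
  have hfix2 : c.2 + (j.2:ℝ) = c.2 * N := by
    have := congrArg Prod.snd hfix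
    simp only [phi] at this
    field_simp at this
    linarith
  have hstep : ∀ k, phi N j (s k) = s (k+1) := by
    intro k
    have hNk : (N:ℝ)^k ≠ 0 := by positivity
    have e1 : (c.1 + (j.1:ℝ)) / N = c.1 := by
      rw [hfix1, mul_div_cancel_right₀ _ (ne_of_gt hN0)]
    have e2 : (c.2 + (j.2:ℝ)) / N = c.2 := by
      rw [hfix2, mul_div_cancel_right₀ _ (ne_of_gt hN0)]
    refine Prod.ext ?_ ?_
    · show (c.1 + (x.1 - c.1) / (N:ℝ)^k + (j.1:ℝ)) / N = c.1 + (x.1 - c.1) / (N:ℝ)^(k+1)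
      calc (c.1 + (x.1 - c.1) / (N:ℝ)^k + (j.1:ℝ)) / N
          = (c.1 + (j.1:ℝ)) / N + ((x.1 - c.1) / (N:ℝ)^k) / N := by ring
        _ = c.1 + (x.1 - c.1) / (N:ℝ)^(k+1) := by rw [e1, div_div, ← pow_succ]
    · show (c.2 + (x.2 - c.2) / (N:ℝ)^k + (j.2:ℝ)) / N = c.2 + (x.2 - c.2) / (N:ℝ)^(k+1)
      calc (c.2 + (x.2 - c.2) / (N:ℝ)^k + (j.2:ℝ)) / N
          = (c.2 + (j.2:ℝ)) / N + ((x.2 - c.2) / (N:ℝ)^k) / N := by ring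
        _ = c.2 + (x.2 - c.2) / (N:ℝ)^(k+1) := by rw [e2, div_div, ← pow_succ]
  have hmem : ∀ k, s k ∈ F := by
    intro k
    induction k with
    | zero => simpa [hs] using hx
    | succ k ih =>
      rw [← hstep k, heq]
      exact Set.mem_biUnion hj ⟨s k, ih, rfl⟩
  have hinv : Tendsto (fun k : ℕ => ((N:ℝ)⁻¹)^k) atTop (nhds 0) := by
    apply tendsto_pow_atTop_nhds_zero_of_lt_one
    · positivity
    · rw [inv_lt_one_iff₀]; right; exact hN1
  have h1 : Tendsto (fun k : ℕ => (x.1 - c.1) / (N:ℝ)^k) atTop (nhds 0) := by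
    simpa [div_eq_mul_inv, inv_pow] using hinv.const_mul (x.1 - c.1)
  have h2 : Tendsto (fun k : ℕ => (x.2 - c.2) / (N:ℝ)^k) atTop (nhds 0) := by
    simpa [div_eq_mul_inv, inv_pow] using hinv.const_mul (x.2 - c.2)
  have htend : Tendsto s atTop (nhds c) := by
    have t1 : Tendsto (fun k : ℕ => c.1 + (x.1 - c.1) / (N:ℝ)^k) atTop (nhds (c.1 + 0)) :=
      tendsto_const_nhds.add h1
    have t2 : Tendsto (fun k : ℕ => c.2 + (x.2 - c.2) / (N:ℝ)^k) atTop (nhds (c.2 + 0)) :=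
      tendsto_const_nhds.add h2
    have := t1.prodMk_nhds t2
    simpa using this
  exact hcomp.isClosed.mem_of_tendsto htend (Eventually.of_forall hmem)

lemma mem_Icc_iff' {p : ℝ × ℝ} :
    p ∈ Set.Icc ((0 : ℝ), (0 : ℝ)) (1, 1) ↔
      (0 ≤ p.1 ∧ p.1 ≤ 1) ∧ (0 ≤ p.2 ∧ p.2 ≤ 1) := by
  simp only [Set.mem_Icc, Prod.le_def]
  tauto

lemma digit_zero {N : ℕ} {D : Finset (ℕ × ℕ)} (hN : 2 ≤ N)
    {S : Set (ℝ × ℝ)} (hS : S ⊆ Set.Icc ((0 : ℝ), (0 : ℝ)) (1, 1))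
    (h : ((0 : ℝ), (0 : ℝ)) ∈ ⋃ j ∈ D, phi N j '' S) : ((0, 0) : ℕ × ℕ) ∈ D := by
  have hN0 : (0:ℝ) < N := by positivity
  simp only [Set.mem_iUnion] at h
  obtain ⟨j, hj, y, hy, hphi⟩ := h
  obtain ⟨⟨hy1, _⟩, ⟨hy2, _⟩⟩ := mem_Icc_iff'.mp (hS hy)
  have e1 : (y.1 + (j.1:ℝ)) / N = 0 := congrArg Prod.fst hphi
  have e2 : (y.2 + (j.2:ℝ)) / N = 0 := congrArg Prod.snd hphi
  have e1' : y.1 + (j.1:ℝ) = 0 := by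
    field_simp at e1; simpa using e1
  have e2' : y.2 + (j.2:ℝ) = 0 := by
    field_simp at e2; simpa using e2
  have hj1 : (j.1:ℝ) = 0 := le_antisymm (by linarith) (by positivity)
  have hj2 : (j.2:ℝ) = 0 := le_antisymm (by linarith) (by positivity)
  have hj1' : j.1 = 0 := by exact_mod_cast hj1
  have hj2' : j.2 = 0 := by exact_mod_cast hj2
  have : j = ((0, 0) : ℕ × ℕ) := Prod.ext hj1' hj2'
  exact this ▸ hj

lemma digit_one {N : ℕ} {D : Finset (ℕ × ℕ)} (hN : 2 ≤ N)
    (hD : ∀ j ∈ D, j.1 < N ∧ j.2 < N)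
    {S : Set (ℝ × ℝ)} (hS : S ⊆ Set.Icc ((0 : ℝ), (0 : ℝ)) (1, 1))
    (h : ((1 : ℝ), (1 : ℝ)) ∈ ⋃ j ∈ D, phi N j '' S) :
    ((N - 1, N - 1) : ℕ × ℕ) ∈ D := by
  have hN0 : (0:ℝ) < N := by positivity
  simp only [Set.mem_iUnion] at h
  obtain ⟨j, hj, y, hy, hphi⟩ := h
  obtain ⟨⟨_, hy1⟩, ⟨_, hy2⟩⟩ := mem_Icc_iff'.mp (hS hy)
  have e1 : (y.1 + (j.1:ℝ)) / N = 1 := congrArg Prod.fst hphi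
  have e2 : (y.2 + (j.2:ℝ)) / N = 1 := congrArg Prod.snd hphi
  have e1' : y.1 + (j.1:ℝ) = N := by field_simp at e1; linarith
  have e2' : y.2 + (j.2:ℝ) = N := by field_simp at e2; linarith
  have hb1 : (j.1 : ℝ) ≥ (N : ℝ) - 1 := by linarith
  have hb2 : (j.2 : ℝ) ≥ (N : ℝ) - 1 := by linarith
  have hc : ((N - 1 : ℕ) : ℝ) = (N : ℝ) - 1 := by
    have : 1 ≤ N := by omega
    push_cast [this]; ring
  have hj1 : N - 1 ≤ j.1 := by exact_mod_cast hc ▸ hb1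
  have hj2 : N - 1 ≤ j.2 := by exact_mod_cast hc ▸ hb2
  have hlt := hD j hj
  have : j = ((N - 1, N - 1) : ℕ × ℕ) := by
    refine Prod.ext ?_ ?_ <;> simp only [] <;> omega
  exact this ▸ hj

lemma corner_iff {N : ℕ} {D : Finset (ℕ × ℕ)} (hN : 2 ≤ N)
    {i i' : ℕ × ℕ} (hdiff1 : i.1 = i'.1 + 1) (hdiff2 : i.2 = i'.2 + 1)
    {X : Set (ℝ × ℝ)} (hX : X ⊆ Set.Icc ((0 : ℝ), (0 : ℝ)) (1, 1))
    (h0 : ((0 : ℝ), (0 : ℝ)) ∈ X ↔ ((0, 0) : ℕ × ℕ) ∈ D)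
    (h1 : ((1 : ℝ), (1 : ℝ)) ∈ X ↔ ((N - 1, N - 1) : ℕ × ℕ) ∈ D) :
    (phi N i '' X ∩ phi N i' '' X).Nonempty ↔
      (((0, 0) : ℕ × ℕ) ∈ D ∧ ((N - 1, N - 1) : ℕ × ℕ) ∈ D) := by
  have hN0 : (0:ℝ) < N := by positivity
  constructor
  · rintro ⟨w, ⟨y, hy, hyw⟩, ⟨z, hz, hzw⟩⟩
    obtain ⟨⟨hy1, hy1'⟩, ⟨hy2, hy2'⟩⟩ := mem_Icc_iff'.mp (hX hy)
    obtain ⟨⟨hz1, hz1'⟩, ⟨hz2, hz2'⟩⟩ := mem_Icc_iff'.mp (hX hz)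
    have e1 : (y.1 + (i.1:ℝ)) / N = (z.1 + (i'.1:ℝ)) / N :=
      congrArg Prod.fst (hyw.trans hzw.symm)
    have e2 : (y.2 + (i.2:ℝ)) / N = (z.2 + (i'.2:ℝ)) / N :=
      congrArg Prod.snd (hyw.trans hzw.symm)
    have c1 : (i.1 : ℝ) = (i'.1 : ℝ) + 1 := by exact_mod_cast hdiff1
    have c2 : (i.2 : ℝ) = (i'.2 : ℝ) + 1 := by exact_mod_cast hdiff2
    have e1' : y.1 + 1 = z.1 := by
      field_simp at e1; linarith
    have e2' : y.2 + 1 = z.2 := by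
      field_simp at e2; linarith
    have a1 : y.1 = 0 := by linarith
    have a2 : y.2 = 0 := by linarith
    have b1 : z.1 = 1 := by linarith
    have b2 : z.2 = 1 := by linarith
    have hy0 : y = ((0:ℝ), (0:ℝ)) := by
      refine Prod.ext ?_ ?_ <;> simp [a1, a2]
    have hz0 : z = ((1:ℝ), (1:ℝ)) := by
      refine Prod.ext ?_ ?_ <;> simp [b1, b2]
    exact ⟨h0.mp (hy0 ▸ hy), h1.mp (hz0 ▸ hz)⟩
  · rintro ⟨hd0, hd1⟩
    refine ⟨phi N i ((0:ℝ), (0:ℝ)), ⟨((0:ℝ), (0:ℝ)), h0.mpr hd0, rfl⟩,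
      ⟨((1:ℝ), (1:ℝ)), h1.mpr hd1, ?_⟩⟩
    have c1 : (i.1 : ℝ) = (i'.1 : ℝ) + 1 := by exact_mod_cast hdiff1
    have c2 : (i.2 : ℝ) = (i'.2 : ℝ) + 1 := by exact_mod_cast hdiff2
    refine Prod.ext ?_ ?_ <;> simp only [phi]
    · rw [c1]; ring
    · rw [c2]; ring

theorem stmt3 (N : ℕ) (D : Finset (ℕ × ℕ)) (hND : GoodDigits N D)
    (F : Set (ℝ × ℝ)) (hF : IsAttractor N D F)
    (Q1 : Set (ℝ × ℝ))
    (hQ1 : Q1 = ⋃ j ∈ D, phi N j '' Set.Icc ((0 : ℝ), (0 : ℝ)) (1, 1))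
    (i i' : ℕ × ℕ) (hi : i ∈ D) (hi' : i' ∈ D)
    (hdiff1 : i.1 = i'.1 + 1) (hdiff2 : i.2 = i'.2 + 1) :
    ((phi N i '' F ∩ phi N i' '' F).Nonempty ↔
      (((0, 0) : ℕ × ℕ) ∈ D ∧ ((N - 1, N - 1) : ℕ × ℕ) ∈ D)) ∧
    ((phi N i '' Q1 ∩ phi N i' '' Q1).Nonempty ↔
      (((0, 0) : ℕ × ℕ) ∈ D ∧ ((N - 1, N - 1) : ℕ × ℕ) ∈ D)) := by
  obtain ⟨hN, hD, -, -⟩ := hND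
  have hN0 : (0:ℝ) < N := by positivity
  have hc : ((N - 1 : ℕ) : ℝ) = (N : ℝ) - 1 := by
    have : 1 ≤ N := by omega
    push_cast [this]; ring
  have hFsub : F ⊆ Set.Icc ((0 : ℝ), (0 : ℝ)) (1, 1) := attractor_subset hN hD hF
  have hIccsub : (Set.Icc ((0 : ℝ), (0 : ℝ)) (1, 1)) ⊆ Set.Icc ((0 : ℝ), (0 : ℝ)) (1, 1) :=
    subset_rfl
  -- fixed points
  have hfix0 : phi N ((0, 0) : ℕ × ℕ) ((0:ℝ), (0:ℝ)) = ((0:ℝ), (0:ℝ)) := by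
    refine Prod.ext ?_ ?_ <;> simp [phi]
  have hfix1 : phi N ((N - 1, N - 1) : ℕ × ℕ) ((1:ℝ), (1:ℝ)) = ((1:ℝ), (1:ℝ)) := by
    refine Prod.ext ?_ ?_ <;> simp only [phi] <;> rw [hc] <;> field_simp <;> ring
  -- memberships for F
  have hF0 : ((0 : ℝ), (0 : ℝ)) ∈ F ↔ ((0, 0) : ℕ × ℕ) ∈ D := by
    constructor
    · intro h
      exact digit_zero hN hFsub (hF.2.2 ▸ h)
    · intro hd
      exact fix_mem_s3 hN hF hd hfix0
  have hF1 : ((1 : ℝ), (1 : ℝ)) ∈ F ↔ ((N - 1, N - 1) : ℕ × ℕ) ∈ D := by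
    constructor
    · intro h
      exact digit_one hN hD hFsub (hF.2.2 ▸ h)
    · intro hd
      exact fix_mem_s3 hN hF hd hfix1
  -- Q1 facts
  have hQsub : Q1 ⊆ Set.Icc ((0 : ℝ), (0 : ℝ)) (1, 1) := by
    rw [hQ1]
    rintro p hp
    simp only [Set.mem_iUnion] at hp
    obtain ⟨j, hj, y, hy, hyp⟩ := hp
    obtain ⟨⟨hy1, hy1'⟩, ⟨hy2, hy2'⟩⟩ := mem_Icc_iff'.mp hy
    have hjb := hD j hj
    have hjb1 : (j.1 : ℝ) + 1 ≤ N := by exact_mod_cast hjb.1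
    have hjb2 : (j.2 : ℝ) + 1 ≤ N := by exact_mod_cast hjb.2
    have hp1 : p.1 = (y.1 + (j.1:ℝ)) / N := (congrArg Prod.fst hyp).symm
    have hp2 : p.2 = (y.2 + (j.2:ℝ)) / N := (congrArg Prod.snd hyp).symm
    refine mem_Icc_iff'.mpr ⟨⟨?_, ?_⟩, ?_, ?_⟩
    · rw [hp1]; positivity
    · rw [hp1, div_le_one hN0]; linarith
    · rw [hp2]; positivity
    · rw [hp2, div_le_one hN0]; linarith
  have hQ0 : ((0 : ℝ), (0 : ℝ)) ∈ Q1 ↔ ((0, 0) : ℕ × ℕ) ∈ D := by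
    rw [hQ1]
    constructor
    · intro h
      exact digit_zero hN hIccsub h
    · intro hd
      refine Set.mem_biUnion hd ⟨((0:ℝ), (0:ℝ)), ?_, hfix0⟩
      exact mem_Icc_iff'.mpr (by norm_num)
  have hQ11 : ((1 : ℝ), (1 : ℝ)) ∈ Q1 ↔ ((N - 1, N - 1) : ℕ × ℕ) ∈ D := by
    rw [hQ1]
    constructor
    · intro h
      exact digit_one hN hD hIccsub h
    · intro hd
      refine Set.mem_biUnion hd ⟨((1:ℝ), (1:ℝ)), ?_, hfix1⟩
      exact mem_Icc_iff'.mpr (by norm_num)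
  exact ⟨corner_iff hN hdiff1 hdiff2 hFsub hF0 hF1,
    corner_iff hN hdiff1 hdiff2 hQsub hQ0 hQ11⟩
end

section
/- Every point of a generalized Sierpiński carpet F = F(N,D) has at most 4 representations, i.e., for every x ∈ F the set of infinite words i₁i₂⋯ ∈ D^∞ with {x} = ⋂_{k≥1} φ_{i₁}∘⋯∘φ_{i_k}(F) has cardinality at most 4. -/
open Set Topology

namespace Stmt4Aux

private def wval (N : ℕ) : List ℕ → ℕ
  | [] => 0
  | a :: l => a * N ^ l.length + wval N l

private lemma wval_lt {N : ℕ} : ∀ l : List ℕ, (∀ a ∈ l, a < N) → wval N l < N ^ l.length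
  | [], _ => by simp [wval]
  | a :: l, h => by
    have h1 : a < N := h a (by simp)
    have h2 := wval_lt l (fun b hb => h b (by simp [hb]))
    have h3 : 0 < N ^ l.length := Nat.pow_pos (by omega)
    simp only [wval, List.length_cons, pow_succ]
    calc a * N ^ l.length + wval N l < a * N ^ l.length + N ^ l.length := by omega
      _ = (a + 1) * N ^ l.length := by ring
      _ ≤ N * N ^ l.length := Nat.mul_le_mul_right _ h1
      _ = N ^ l.length * N := by ring

private lemma wval_inj {N : ℕ} : ∀ l1 l2 : List ℕ, l1.length = l2.length →
    (∀ a ∈ l1, a < N) → (∀ a ∈ l2, a < N) → wval N l1 = wval N l2 → l1 = l2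
  | [], [], _, _, _, _ => rfl
  | a :: l1, b :: l2, hlen, h1, h2, heq => by
    have hlen' : l1.length = l2.length := by simpa using hlen
    have hv1 := wval_lt l1 (fun c hc => h1 c (by simp [hc]))
    have hv2 := wval_lt l2 (fun c hc => h2 c (by simp [hc]))
    simp only [wval] at heq
    rw [hlen'] at heq hv1
    have hab : a = b := by
      rcases Nat.lt_trichotomy a b with h | h | h
      · nlinarith [hv1, hv2, heq]
      · exact h
      · nlinarith [hv1, hv2, heq]
    subst hab
    have hw : wval N l1 = wval N l2 := by omega
    rw [wval_inj l1 l2 hlen' (fun c hc => h1 c (by simp [hc]))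
      (fun c hc => h2 c (by simp [hc])) hw]

private lemma phiW_apply {N : ℕ} (hN : 0 < N) : ∀ (l : List (ℕ × ℕ)) (p : ℝ × ℝ),
    phiW N l p = ((p.1 + (wval N (l.map Prod.fst) : ℝ)) / (N : ℝ) ^ l.length,
                  (p.2 + (wval N (l.map Prod.snd) : ℝ)) / (N : ℝ) ^ l.length)
  | [], p => by simp [phiW, wval]
  | i :: l, p => by
    have hNR : (N : ℝ) ≠ 0 := by positivity
    have ih := phiW_apply hN l p
    show phi N i (phiW N l p) = _
    rw [ih]
    simp only [phi, wval, List.map_cons, List.length_cons, List.length_map]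
    push_cast
    refine Prod.ext ?_ ?_ <;> · simp only [pow_succ]; field_simp; ring

private lemma list_pair_ext : ∀ (l1 l2 : List (ℕ × ℕ)),
    l1.map Prod.fst = l2.map Prod.fst → l1.map Prod.snd = l2.map Prod.snd → l1 = l2
  | [], [], _, _ => rfl
  | a :: l1, b :: l2, h1, h2 => by
    simp only [List.map_cons, List.cons.injEq] at h1 h2
    rw [list_pair_ext l1 l2 h1.2 h2.2, Prod.ext h1.1 h2.1]
  | [], _ :: _, h1, _ => by simp at h1
  | _ :: _, [], h1, _ => by simp at h1

private lemma interval_bdd {S : Set ℝ} (hne : S.Nonempty) (hba : BddAbove S) (hbb : BddBelow S)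
    {R : ℝ} (hR : 2 ≤ R)
    (hstep : ∀ t ∈ S, ∃ s ∈ S, ∃ d : ℝ, 0 ≤ d ∧ d ≤ R - 1 ∧ t = (s + d) / R) :
    ∀ t ∈ S, 0 ≤ t ∧ t ≤ 1 := by
  have hR0 : (0:ℝ) < R := by linarith
  set M := sSup S with hM
  set m := sInf S with hm
  have hMle : M ≤ (M + (R - 1)) / R := by
    apply csSup_le hne
    intro t ht
    obtain ⟨s, hs, d, hd0, hd1, rfl⟩ := hstep t ht
    have hsM : s ≤ M := le_csSup hba hs
    exact (div_le_div_iff_of_pos_right hR0).mpr (by linarith)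
  have hM1 : M ≤ 1 := by
    have h2 : M * R ≤ M + (R - 1) := by
      rw [le_div_iff₀ hR0] at hMle; linarith
    nlinarith
  have hmge : m / R ≤ m := by
    apply le_csInf hne
    intro t ht
    obtain ⟨s, hs, d, hd0, hd1, rfl⟩ := hstep t ht
    have hms : m ≤ s := csInf_le hbb hs
    exact (div_le_div_iff_of_pos_right hR0).mpr (by linarith)
  have hm0 : 0 ≤ m := by
    have h2 : m ≤ m * R := by rw [div_le_iff₀ hR0] at hmge; linarith
    nlinarith
  intro t ht
  exact ⟨le_trans hm0 (csInf_le hbb ht), le_trans (le_csSup hba ht) hM1⟩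

private lemma attractor_subset {N : ℕ} {D : Finset (ℕ × ℕ)} {F : Set (ℝ × ℝ)}
    (hN : 2 ≤ N) (hD : ∀ i ∈ D, i.1 < N ∧ i.2 < N) (hF : IsAttractor N D F) :
    ∀ p ∈ F, (0 ≤ p.1 ∧ p.1 ≤ 1) ∧ (0 ≤ p.2 ∧ p.2 ≤ 1) := by
  obtain ⟨hne, hcpt, heq⟩ := hF
  have hR : (2:ℝ) ≤ (N : ℝ) := by exact_mod_cast hN
  have key : ∀ c : ℝ × ℝ → ℝ, Continuous c →
      (∀ i ∈ D, ∀ q : ℝ × ℝ, ∃ d : ℕ, d < N ∧ c (phi N i q) = (c q + (d:ℝ)) / N) →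
      ∀ p ∈ F, 0 ≤ c p ∧ c p ≤ 1 := by
    intro c hc hstep p hp
    have himg : (c '' F).Nonempty := hne.image c
    have hcpt' : IsCompact (c '' F) := hcpt.image hc
    have := interval_bdd himg hcpt'.bddAbove hcpt'.bddBelow hR ?_ (c p) ⟨p, hp, rfl⟩
    · exact this
    · rintro t ⟨q, hq, rfl⟩
      rw [heq] at hq
      simp only [Set.mem_iUnion] at hq
      obtain ⟨i, hi, r, hr, rfl⟩ := hq
      obtain ⟨d, hd, hval⟩ := hstep i hi r
      refine ⟨c r, ⟨r, hr, rfl⟩, (d : ℝ), by positivity, ?_, hval⟩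
      have : (d : ℝ) ≤ (N : ℝ) - 1 := by
        have : d + 1 ≤ N := hd
        have := (Nat.cast_le (α := ℝ)).mpr this
        push_cast at this; linarith
      exact this
  intro p hp
  constructor
  · exact key (fun q => q.1) continuous_fst
      (fun i hi q => ⟨i.1, (hD i hi).1, rfl⟩) p hp
  · exact key (fun q => q.2) continuous_snd
      (fun i hi q => ⟨i.2, (hD i hi).2, rfl⟩) p hp

private lemma omega_bound {N : ℕ} {D : Finset (ℕ × ℕ)} {F : Set (ℝ × ℝ)}
    (hND : GoodDigits N D) (hF : IsAttractor N D F) (x : ℝ × ℝ) (k : ℕ) :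
    (OmegaW N D F x k).Finite ∧ (OmegaW N D F x k).ncard ≤ 4 := by
  obtain ⟨hN, hD, -, -⟩ := hND
  have hN0 : 0 < N := by omega
  have hNk : (0:ℝ) < (N : ℝ) ^ k := by positivity
  have hFsub := attractor_subset hN hD hF
  set v : List (ℕ × ℕ) → ℕ × ℕ :=
    fun l => (wval N (l.map Prod.fst), wval N (l.map Prod.snd)) with hv
  set m1 := ⌊x.1 * (N : ℝ) ^ k⌋₊ with hm1
  set m2 := ⌊x.2 * (N : ℝ) ^ k⌋₊ with hm2
  set T : Finset (ℕ × ℕ) := ({m1 - 1, m1} : Finset ℕ) ×ˢ ({m2 - 1, m2} : Finset ℕ) with hT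
  -- digit bounds for words in Omega
  have hdig : ∀ l ∈ OmegaW N D F x k, (∀ a ∈ l.map Prod.fst, a < N) ∧
      (∀ a ∈ l.map Prod.snd, a < N) ∧ l.length = k := by
    rintro l ⟨⟨hlen, hmem⟩, -⟩
    refine ⟨?_, ?_, hlen⟩ <;>
    · intro a ha
      simp only [List.mem_map] at ha
      obtain ⟨i, hi, rfl⟩ := ha
      have := hD i (hmem i hi)
      omega
  have hinj : Set.InjOn v (OmegaW N D F x k) := by
    intro l1 h1 l2 h2 hveq
    obtain ⟨hf1, hs1, hl1⟩ := hdig l1 h1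
    obtain ⟨hf2, hs2, hl2⟩ := hdig l2 h2
    have hlen : (l1.map Prod.fst).length = (l2.map Prod.fst).length := by
      simp [hl1, hl2]
    have hlen2 : (l1.map Prod.snd).length = (l2.map Prod.snd).length := by
      simp [hl1, hl2]
    have heq1 := congrArg Prod.fst hveq
    have heq2 := congrArg Prod.snd hveq
    simp only [hv] at heq1 heq2
    exact list_pair_ext l1 l2 (wval_inj _ _ hlen hf1 hf2 heq1)
      (wval_inj _ _ hlen2 hs1 hs2 heq2)
  have hsub : v '' (OmegaW N D F x k) ⊆ ↑T := by
    rintro - ⟨l, hl, rfl⟩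
    obtain ⟨⟨hlen, hmem⟩, p, hp, hpx⟩ := hl
    have hpb := hFsub p hp
    rw [phiW_apply hN0 l p, hlen] at hpx
    have hx1 : (wval N (l.map Prod.fst) : ℝ) ≤ x.1 * (N:ℝ)^k ∧
        x.1 * (N:ℝ)^k ≤ wval N (l.map Prod.fst) + 1 := by
      have h1 : x.1 = (p.1 + (wval N (l.map Prod.fst) : ℝ)) / (N : ℝ) ^ k :=
        (congrArg Prod.fst hpx).symm
      rw [h1, div_mul_cancel₀ _ (ne_of_gt hNk)]
      constructor <;> linarith [hpb.1.1, hpb.1.2]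
    have hx2 : (wval N (l.map Prod.snd) : ℝ) ≤ x.2 * (N:ℝ)^k ∧
        x.2 * (N:ℝ)^k ≤ wval N (l.map Prod.snd) + 1 := by
      have h1 : x.2 = (p.2 + (wval N (l.map Prod.snd) : ℝ)) / (N : ℝ) ^ k :=
        (congrArg Prod.snd hpx).symm
      rw [h1, div_mul_cancel₀ _ (ne_of_gt hNk)]
      constructor <;> linarith [hpb.2.1, hpb.2.2]
    have hw1le : wval N (l.map Prod.fst) ≤ m1 := Nat.le_floor hx1.1
    have hw2le : wval N (l.map Prod.snd) ≤ m2 := Nat.le_floor hx2.1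
    have hw1ge : m1 ≤ wval N (l.map Prod.fst) + 1 := by
      have h0 : (0:ℝ) ≤ x.1 * (N:ℝ)^k := le_trans (by positivity) hx1.1
      have := Nat.floor_le h0
      have h2 : (m1 : ℝ) ≤ (wval N (l.map Prod.fst) + 1 : ℕ) := by push_cast; linarith [hx1.2]
      exact_mod_cast h2
    have hw2ge : m2 ≤ wval N (l.map Prod.snd) + 1 := by
      have h0 : (0:ℝ) ≤ x.2 * (N:ℝ)^k := le_trans (by positivity) hx2.1
      have := Nat.floor_le h0
      have h2 : (m2 : ℝ) ≤ (wval N (l.map Prod.snd) + 1 : ℕ) := by push_cast; linarith [hx2.2]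
      exact_mod_cast h2
    simp only [hT, hv, hm1, hm2, Finset.coe_product, Set.mem_prod, Finset.coe_insert, Finset.coe_singleton,
      Set.mem_insert_iff, Set.mem_singleton_iff]
    constructor <;> [skip; skip] <;> omega
  have hTcard : T.card ≤ 4 := by
    have := Finset.card_product ({m1 - 1, m1} : Finset ℕ) ({m2 - 1, m2} : Finset ℕ)
    have h1 : ({m1 - 1, m1} : Finset ℕ).card ≤ 2 := Finset.card_insert_le _ _ |>.trans (by simp)
    have h2 : ({m2 - 1, m2} : Finset ℕ).card ≤ 2 := Finset.card_insert_le _ _ |>.trans (by simp)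
    calc T.card = _ * _ := this
      _ ≤ 2 * 2 := Nat.mul_le_mul h1 h2
  have himgfin : (v '' (OmegaW N D F x k)).Finite := T.finite_toSet.subset hsub
  have hfin : (OmegaW N D F x k).Finite := Set.Finite.of_finite_image himgfin hinj
  refine ⟨hfin, ?_⟩
  calc (OmegaW N D F x k).ncard = (v '' (OmegaW N D F x k)).ncard :=
        (Set.ncard_image_of_injOn hinj).symm
    _ ≤ (↑T : Set (ℕ × ℕ)).ncard := Set.ncard_le_ncard hsub T.finite_toSet
    _ = T.card := Set.ncard_coe_finset T
    _ ≤ 4 := hTcard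

end Stmt4Aux

theorem stmt4 (N : ℕ) (D : Finset (ℕ × ℕ)) (hND : GoodDigits N D)
    (F : Set (ℝ × ℝ)) (hF : IsAttractor N D F) (x : ℝ × ℝ) (hx : x ∈ F) :
    {ii : ℕ → ℕ × ℕ | IsRep N D F x ii}.Finite ∧
      {ii : ℕ → ℕ × ℕ | IsRep N D F x ii}.ncard ≤ 4 := by
  classical
  set S := {ii : ℕ → ℕ × ℕ | IsRep N D F x ii} with hS
  have hcard : ∀ s : Finset (ℕ → ℕ × ℕ), ↑s ⊆ S → s.card ≤ 4 := by
    intro s hsS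
    set χ : (ℕ → ℕ × ℕ) → (ℕ → ℕ × ℕ) → ℕ := fun f g =>
      if h : ∃ m, f m ≠ g m then Nat.find h else 0 with hχ
    set k := 1 + s.sup (fun f => s.sup (fun g => χ f g)) with hk
    set P : (ℕ → ℕ × ℕ) → List (ℕ × ℕ) :=
      fun f => List.ofFn fun j : Fin k => f (j : ℕ) with hP
    have hinjP : Set.InjOn P ↑s := by
      intro f hf g hg hPeq
      by_contra hne
      have hex : ∃ m, f m ≠ g m := by
        by_contra h
        push_neg at h
        exact hne (funext h)
      have hlt : Nat.find hex < k := by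
        have h1 : χ f g ≤ s.sup (fun g' => χ f g') := Finset.le_sup hg
      -- fix below
        have h2 : s.sup (fun g' => χ f g') ≤ s.sup (fun f' => s.sup (fun g' => χ f' g')) :=
          Finset.le_sup (f := fun f' => s.sup (fun g' => χ f' g')) hf
        have h3 : χ f g = Nat.find hex := dif_pos hex
        omega
      have hfun := List.ofFn_inj.mp hPeq
      have := congrFun hfun ⟨Nat.find hex, hlt⟩
      exact Nat.find_spec hex this
    have himgsub : ↑(s.image P) ⊆ OmegaW N D F x k := by
      intro l hl
      simp only [Finset.coe_image, Set.mem_image, Finset.mem_coe] at hl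
      obtain ⟨f, hf, rfl⟩ := hl
      have hrep : IsRep N D F x f := hsS hf
      refine ⟨⟨by simp [hP], ?_⟩, hrep.2 k⟩
      intro a ha
      simp only [hP, List.mem_ofFn] at ha
      obtain ⟨j, rfl⟩ := ha
      exact hrep.1 _
    calc s.card = (s.image P).card := (Finset.card_image_of_injOn hinjP).symm
      _ = (↑(s.image P) : Set (List (ℕ × ℕ))).ncard := (Set.ncard_coe_finset _).symm
      _ ≤ (OmegaW N D F x k).ncard :=
          Set.ncard_le_ncard himgsub (Stmt4Aux.omega_bound hND hF x k).1
      _ ≤ 4 := (Stmt4Aux.omega_bound hND hF x k).2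
  have hfin : S.Finite := by
    by_contra h
    have hinf : S.Infinite := h
    obtain ⟨t, hts, htc⟩ := hinf.exists_subset_card_eq 5
    have := hcard t hts
    omega
  refine ⟨hfin, ?_⟩
  have h4 := hcard hfin.toFinset (by simp)
  calc S.ncard = (↑hfin.toFinset : Set (ℕ → ℕ × ℕ)).ncard := by rw [hfin.coe_toFinset]
    _ = hfin.toFinset.card := Set.ncard_coe_finset _
    _ ≤ 4 := h4
end
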